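/- arXiv:1809.08303 — 15 statements merged into one kernel-verified Lean document; each statement's English description precedes it below -/
import Mathlib

section
/- Let (X,𝒜) be a measurable space, μ a monotone measure, ∘ : [0,∞]×[0,∞] → [0,∞] a nondecreasing binary map with a∘0 = 0 for all a and x ↦ x∘y left-continuous for each fixed y. Let f : X → [0,∞] be measurable, H : [0,∞] → [0,∞] with H∘f measurable, and p = Su_{μ,A}(f) := sup_{t≥0} min(t, μ(A ∩ {f ≥ t})) < ∞. Then the generalized Sugeno integral I_{∘,μ,A}(H(f)) := sup_{t≥0} t ∘ μ(A ∩ {H(f) ≥ t}) satisfies I_{∘,μ,A}(H(f)) ≥ max( (min(H(p⁻), inf H([p,∞])) ∘ p), (inf H) ∘ μ(A) ), where H(p⁻) denotes the lower left-hand limit of H at p (with H(0⁻) = 0). -/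
open scoped ENNReal
open Set

variable {X : Type*}

/-- Generalized Sugeno integral with respect to a binary operation `op`. -/
noncomputable def gSugeno (op : ℝ≥0∞ → ℝ≥0∞ → ℝ≥0∞) (μ : Set X → ℝ≥0∞) (A : Set X)
    (f : X → ℝ≥0∞) : ℝ≥0∞ :=
  ⨆ t : ℝ≥0∞, op t (μ (A ∩ {x | t ≤ f x}))

/-- The Sugeno integral. -/
noncomputable def sugeno (μ : Set X → ℝ≥0∞) (A : Set X) (f : X → ℝ≥0∞) : ℝ≥0∞ :=
  ⨆ t : ℝ≥0∞, min t (μ (A ∩ {x | t ≤ f x}))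

/-- Lower left-hand limit of `H` at `p`: `lim_{ε→0} inf H((p-ε,p))`, with value `0` at `p = 0`. -/
noncomputable def lowerLeftLim (H : ℝ≥0∞ → ℝ≥0∞) (p : ℝ≥0∞) : ℝ≥0∞ :=
  ⨆ q ∈ Iio p, ⨅ y ∈ Ioo q p, H y

theorem stmt0 [MeasurableSpace X] (μ : Set X → ℝ≥0∞) (A : Set X) (hA : MeasurableSet A)
    (hμ0 : μ ∅ = 0)
    (hμmono : ∀ B C : Set X, MeasurableSet B → MeasurableSet C → B ⊆ C → μ B ≤ μ C)
    (op : ℝ≥0∞ → ℝ≥0∞ → ℝ≥0∞)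
    (hop : ∀ a b c d : ℝ≥0∞, a ≤ c → b ≤ d → op a b ≤ op c d)
    (hop0 : ∀ a : ℝ≥0∞, op a 0 = 0)
    (hlc : ∀ y x : ℝ≥0∞, ContinuousWithinAt (fun a => op a y) (Iio x) x)
    (f : X → ℝ≥0∞) (hf : Measurable f)
    (H : ℝ≥0∞ → ℝ≥0∞) (hHf : Measurable (H ∘ f))
    (p : ℝ≥0∞) (hp : p = sugeno μ A f) (hpfin : p ≠ ⊤) :
    max (op (min (lowerLeftLim H p) (⨅ y ∈ Ici p, H y)) p) (op (⨅ y : ℝ≥0∞, H y) (μ A))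
      ≤ gSugeno op μ A (H ∘ f) := by
  set S := gSugeno op μ A (H ∘ f) with hS
  have hinf : op (⨅ y : ℝ≥0∞, H y) (μ A) ≤ S := by
    have hset : A ∩ {x | (⨅ y : ℝ≥0∞, H y) ≤ (H ∘ f) x} = A := by
      ext x; simp [iInf_le]
    calc op (⨅ y : ℝ≥0∞, H y) (μ A)
        = op (⨅ y : ℝ≥0∞, H y) (μ (A ∩ {x | (⨅ y : ℝ≥0∞, H y) ≤ (H ∘ f) x})) := by rw [hset]
      _ ≤ S := le_iSup (fun t => op t (μ (A ∩ {x | t ≤ (H ∘ f) x}))) _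
  have hpA : p ≤ μ A := by
    rw [hp, sugeno]
    refine iSup_le fun t => (min_le_right _ _).trans ?_
    exact hμmono _ _ (hA.inter (measurableSet_le measurable_const hf)) hA inter_subset_left
  have key : ∀ q < p, q < μ (A ∩ {x | q < f x}) := by
    intro q hq
    rw [hp, sugeno] at hq
    obtain ⟨t, ht⟩ := lt_iSup_iff.mp hq
    have ht1 : q < t := lt_of_lt_of_le ht (min_le_left _ _)
    have ht2 : q < μ (A ∩ {x | t ≤ f x}) := lt_of_lt_of_le ht (min_le_right _ _)
    refine lt_of_lt_of_le ht2 (hμmono _ _ ?_ ?_ ?_)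
    · exact hA.inter (measurableSet_le measurable_const hf)
    · exact hA.inter (measurableSet_lt measurable_const hf)
    · exact inter_subset_inter_right _ (fun x hx => lt_of_lt_of_le ht1 hx)
  set c := min (lowerLeftLim H p) (⨅ y ∈ Ici p, H y) with hc
  have hmain : op c p ≤ S := by
    rcases eq_or_ne c 0 with h0 | h0
    · rw [h0]
      calc op 0 p ≤ op 0 (μ A) := hop _ _ _ _ le_rfl hpA
        _ = op 0 (μ (A ∩ {x | (0:ℝ≥0∞) ≤ (H ∘ f) x})) := by
            congr 2; ext x; simp
        _ ≤ S := le_iSup (fun t => op t (μ (A ∩ {x | t ≤ (H ∘ f) x}))) 0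
    · have hr : ∀ r ∈ Iio c, op r p ≤ S := by
        intro r hrc
        have hr1 : r < lowerLeftLim H p := lt_of_lt_of_le hrc (min_le_left _ _)
        have hr2 : r < ⨅ y ∈ Ici p, H y := lt_of_lt_of_le hrc (min_le_right _ _)
        rw [lowerLeftLim, lt_iSup_iff] at hr1
        obtain ⟨q, hq⟩ := hr1
        rw [lt_iSup_iff] at hq
        obtain ⟨hqp, hq⟩ := hq
        have hqp : q < p := hqp
        have hHgt : ∀ y, q < y → r ≤ H y := by
          intro y hy
          rcases lt_or_ge y p with h | h
          · exact le_of_lt (lt_of_lt_of_le hq (iInf₂_le y ⟨hy, h⟩))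
          · exact le_of_lt (lt_of_lt_of_le hr2 (iInf₂_le y h))
        have hsub : ∀ q', q ≤ q' → A ∩ {x | q' < f x} ⊆ A ∩ {x | r ≤ (H ∘ f) x} := by
          intro q' hq' x hx
          exact ⟨hx.1, hHgt _ (lt_of_le_of_lt hq' hx.2)⟩
        have hM : p ≤ μ (A ∩ {x | r ≤ (H ∘ f) x}) := by
          by_contra hcon
          push_neg at hcon
          set M := μ (A ∩ {x | r ≤ (H ∘ f) x}) with hMdef
          have hq'p : max q M < p := max_lt hqp hcon
          have := key _ hq'p
          have hle : μ (A ∩ {x | max q M < f x}) ≤ M :=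
            hμmono _ _ (hA.inter (measurableSet_lt measurable_const hf))
              (hA.inter (measurableSet_le measurable_const hHf))
              (hsub _ (le_max_left _ _))
          exact absurd (lt_of_lt_of_le this hle) (not_lt.mpr (le_max_right _ _))
        calc op r p ≤ op r (μ (A ∩ {x | r ≤ (H ∘ f) x})) := hop _ _ _ _ le_rfl hM
          _ ≤ S := le_iSup (fun t => op t (μ (A ∩ {x | t ≤ (H ∘ f) x}))) r
      have hne : (nhdsWithin c (Iio c)).NeBot :=
        nhdsWithin_Iio_self_neBot' ⟨0, pos_iff_ne_zero.mpr h0⟩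
      exact le_of_tendsto (hlc p c) (eventually_nhdsWithin_of_forall hr)
  exact max_le hmain hinf
end

section
/- Let μ be a monotone measure that is weakly subadditive on A (i.e., μ(A) ≤ μ(A∩B) + μ(A∩Bᶜ) for all B ∈ 𝒜), ∘ a nondecreasing binary map with a∘0 = 0 and x ↦ x∘y left-continuous for every fixed y. Let f : X → [0,∞] be measurable, H : [0,∞] → [0,∞] with H∘f measurable, and p = Su_{μ,A}(f) < ∞. Then I_{∘,μ,A}(H(f)) ≥ max( (min(H(p⁺), inf H([0,p])) ∘ (μ(A) − p)), (inf H) ∘ μ(A) ), where H(p⁺) = lim_{ε→0} inf H((p, p+ε)) and subtraction is truncated at 0 when μ(A) ≤ p. -/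
open scoped ENNReal
open Set

variable {X : Type*}

/-- Lower right-hand limit of `H` at `p`: `lim_{ε→0} inf H((p,p+ε))`. -/
noncomputable def lowerRightLim (H : ℝ≥0∞ → ℝ≥0∞) (p : ℝ≥0∞) : ℝ≥0∞ :=
  ⨆ q ∈ Ioi p, ⨅ y ∈ Ioo p q, H y

theorem stmt1 [MeasurableSpace X] (μ : Set X → ℝ≥0∞) (A : Set X) (hA : MeasurableSet A)
    (hμ0 : μ ∅ = 0)
    (hμmono : ∀ B C : Set X, MeasurableSet B → MeasurableSet C → B ⊆ C → μ B ≤ μ C)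
    (hμwsub : ∀ B : Set X, MeasurableSet B → μ A ≤ μ (A ∩ B) + μ (A ∩ Bᶜ))
    (op : ℝ≥0∞ → ℝ≥0∞ → ℝ≥0∞)
    (hop : ∀ a b c d : ℝ≥0∞, a ≤ c → b ≤ d → op a b ≤ op c d)
    (hop0 : ∀ a : ℝ≥0∞, op a 0 = 0)
    (hlc : ∀ y x : ℝ≥0∞, ContinuousWithinAt (fun a => op a y) (Iio x) x)
    (f : X → ℝ≥0∞) (hf : Measurable f)
    (H : ℝ≥0∞ → ℝ≥0∞) (hHf : Measurable (H ∘ f))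
    (p : ℝ≥0∞) (hp : p = sugeno μ A f) (hpfin : p ≠ ⊤) :
    max (op (min (lowerRightLim H p) (⨅ y ∈ Icc 0 p, H y)) (μ A - p))
        (op (⨅ y : ℝ≥0∞, H y) (μ A))
      ≤ gSugeno op μ A (H ∘ f) := by
  set J := gSugeno op μ A (H ∘ f) with hJ
  have hterm : ∀ t : ℝ≥0∞, op t (μ (A ∩ {x | t ≤ H (f x)})) ≤ J := fun t =>
    le_iSup (fun t : ℝ≥0∞ => op t (μ (A ∩ {x | t ≤ (H ∘ f) x}))) t
  -- second branch
  have h2 : op (⨅ y : ℝ≥0∞, H y) (μ A) ≤ J := by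
    have hA' : A ∩ {x | (⨅ y : ℝ≥0∞, H y) ≤ H (f x)} = A := by
      apply inter_eq_self_of_subset_left
      intro x _
      exact iInf_le H (f x)
    have := hterm (⨅ y : ℝ≥0∞, H y)
    rwa [hA'] at this
  -- first branch
  set c := min (lowerRightLim H p) (⨅ y ∈ Icc 0 p, H y) with hc
  set y0 := μ A - p with hy0
  -- key: for all t < c, op t y0 ≤ J
  have hkey : ∀ t : ℝ≥0∞, t < c → op t y0 ≤ J := by
    intro t ht
    have ht1 : t < lowerRightLim H p := lt_of_lt_of_le ht (min_le_left _ _)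
    have ht2 : t < ⨅ y ∈ Icc 0 p, H y := lt_of_lt_of_le ht (min_le_right _ _)
    rw [lowerRightLim, lt_iSup_iff] at ht1
    obtain ⟨q, hq⟩ := ht1
    rw [lt_iSup_iff] at hq
    obtain ⟨hpq, hq⟩ := hq
    -- H y > t for all y in Ioo p q, and H y > t for all y ≤ p
    have hIoo : ∀ y ∈ Ioo p q, t ≤ H y := fun y hy =>
      (lt_of_lt_of_le hq (iInf₂_le y hy)).le
    have hIcc : ∀ y : ℝ≥0∞, y ≤ p → t ≤ H y := fun y hy =>
      (lt_of_lt_of_le ht2 (iInf₂_le y ⟨(zero_le : 0 ≤ y), hy⟩)).le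
    -- subset
    have hsub : A ∩ {x | f x < q} ⊆ A ∩ {x | t ≤ H (f x)} := by
      rintro x ⟨hxA, hxq⟩
      refine ⟨hxA, ?_⟩
      rcases le_or_gt (f x) p with h | h
      · exact hIcc _ h
      · exact hIoo _ ⟨h, hxq⟩
    -- μ (A ∩ {f ≥ q}) ≤ p
    have hμq : μ (A ∩ {x | q ≤ f x}) ≤ p := by
      have hmin : min q (μ (A ∩ {x | q ≤ f x})) ≤ p := by
        rw [hp]
        exact le_iSup (fun s : ℝ≥0∞ => min s (μ (A ∩ {x | s ≤ f x}))) q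
      rcases min_cases q (μ (A ∩ {x | q ≤ f x})) with ⟨he, hle⟩ | ⟨he, hle⟩
      · exact absurd (he ▸ hmin) (not_le.mpr hpq)
      · exact he ▸ hmin
    -- weak subadditivity
    have hBmeas : MeasurableSet {x | q ≤ f x} := hf measurableSet_Ici
    have hws := hμwsub {x | q ≤ f x} hBmeas
    have hcompl : A ∩ {x | q ≤ f x}ᶜ = A ∩ {x | f x < q} := by
      ext x
      simp [not_le]
    rw [hcompl] at hws
    have hy0le : y0 ≤ μ (A ∩ {x | f x < q}) := by
      rw [hy0, tsub_le_iff_right]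
      calc μ A ≤ μ (A ∩ {x | q ≤ f x}) + μ (A ∩ {x | f x < q}) := hws
        _ ≤ p + μ (A ∩ {x | f x < q}) := add_le_add_left hμq _
        _ = μ (A ∩ {x | f x < q}) + p := add_comm _ _
    have hmeas1 : MeasurableSet (A ∩ {x | f x < q}) :=
      hA.inter (hf measurableSet_Iio)
    have hmeas2 : MeasurableSet (A ∩ {x | t ≤ H (f x)}) :=
      hA.inter (hHf measurableSet_Ici)
    have hy0le' : y0 ≤ μ (A ∩ {x | t ≤ H (f x)}) :=
      le_trans hy0le (hμmono _ _ hmeas1 hmeas2 hsub)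
    exact le_trans (hop t y0 t _ le_rfl hy0le') (hterm t)
  -- conclude op c y0 ≤ J
  have h1 : op c y0 ≤ J := by
    rcases eq_or_lt_of_le (zero_le : 0 ≤ c) with h0 | h0
    · -- c = 0
      have hA0 : A ∩ {x | (0:ℝ≥0∞) ≤ H (f x)} = A := by
        apply inter_eq_self_of_subset_left
        intro x _
        exact (zero_le : 0 ≤ H (f x))
      have := hterm 0
      rw [hA0] at this
      calc op c y0 = op 0 y0 := by rw [← h0]
        _ ≤ op 0 (μ A) := hop _ _ _ _ le_rfl tsub_le_self
        _ ≤ J := this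
    · -- c > 0 : use left continuity
      have hne : (Iio c).Nonempty := ⟨0, h0⟩
      haveI : Filter.NeBot (nhdsWithin c (Iio c)) := nhdsWithin_Iio_self_neBot' hne
      have htend : Filter.Tendsto (fun a => op a y0) (nhdsWithin c (Iio c))
          (nhds (op c y0)) := hlc y0 c
      refine le_of_tendsto htend ?_
      filter_upwards [self_mem_nhdsWithin] with t ht
      exact hkey t ht
  exact max_le h1 h2
end

section
/- Let μ be a monotone measure, f : X → [0,∞] measurable, and H : [0,∞] → [0,∞] nondecreasing and left-continuous at p = Su_{μ,A}(f) < ∞. Then the Sugeno integral satisfies Su_{μ,A}(H∘f) ≥ min(H(p), p). -/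
open scoped ENNReal
open Set

variable {X : Type*}

theorem stmt2 [MeasurableSpace X] (μ : Set X → ℝ≥0∞) (A : Set X) (hA : MeasurableSet A)
    (hμ0 : μ ∅ = 0)
    (hμmono : ∀ B C : Set X, MeasurableSet B → MeasurableSet C → B ⊆ C → μ B ≤ μ C)
    (f : X → ℝ≥0∞) (hf : Measurable f)
    (H : ℝ≥0∞ → ℝ≥0∞) (hH : Monotone H)
    (p : ℝ≥0∞) (hp : p = sugeno μ A f) (hpfin : p ≠ ⊤)
    (hHlc : ContinuousWithinAt H (Iio p) p) :
    min (H p) p ≤ sugeno μ A (H ∘ f) := by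
  -- Key step: for every t < p, min (H t) t ≤ sugeno μ A (H ∘ f)
  have key : ∀ t < p, min (H t) t ≤ sugeno μ A (H ∘ f) := by
    intro t ht
    rw [hp] at ht
    obtain ⟨s, hs⟩ := lt_iSup_iff.mp ht
    have hts : t < s := lt_of_lt_of_le hs (min_le_left _ _)
    have htμ : t < μ (A ∩ {x | s ≤ f x}) := lt_of_lt_of_le hs (min_le_right _ _)
    -- the set {u | H s ≤ H u} is OrdConnected, hence measurable
    have hU : MeasurableSet {u : ℝ≥0∞ | H s ≤ H u} := by
      apply Set.OrdConnected.measurableSet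
      constructor
      intro a ha b _ c hc
      exact le_trans ha (hH hc.1)
    have hmeas1 : MeasurableSet (A ∩ {x | s ≤ f x}) :=
      hA.inter (hf measurableSet_Ici)
    have hmeas2 : MeasurableSet (A ∩ {x | H s ≤ (H ∘ f) x}) :=
      hA.inter (hf hU)
    have hsub : A ∩ {x | s ≤ f x} ⊆ A ∩ {x | H s ≤ (H ∘ f) x} :=
      inter_subset_inter_right _ (fun x hx => hH hx)
    have hμle : μ (A ∩ {x | s ≤ f x}) ≤ μ (A ∩ {x | H s ≤ (H ∘ f) x}) :=
      hμmono _ _ hmeas1 hmeas2 hsub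
    calc min (H t) t ≤ min (H s) (μ (A ∩ {x | H s ≤ (H ∘ f) x})) :=
          min_le_min (hH hts.le) (le_trans htμ.le hμle)
      _ ≤ sugeno μ A (H ∘ f) := le_iSup (fun u => min u (μ (A ∩ {x | u ≤ (H ∘ f) x}))) (H s)
  rcases eq_or_lt_of_le (zero_le : 0 ≤ p) with h0 | h0
  · calc min (H p) p ≤ p := min_le_right _ _
      _ = 0 := h0.symm
      _ ≤ _ := zero_le
  · have hne : (Iio p).Nonempty := ⟨0, h0⟩
    haveI : (nhdsWithin p (Iio p)).NeBot := nhdsWithin_Iio_self_neBot' hne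
    have htend : Filter.Tendsto (fun t => min (H t) t) (nhdsWithin p (Iio p))
        (nhds (min (H p) p)) := by
      exact Filter.Tendsto.min hHlc (nhdsWithin_le_nhds)
    refine le_of_tendsto htend ?_
    filter_upwards [self_mem_nhdsWithin] with t ht
    exact key t ht
end

section
/- Let μ be a monotone measure, f : X → [0,∞) measurable with p = Su_{μ,A}(f) < ∞, and H : [0,∞) → [0,∞) a convex function attaining its infimum at a point a with p ≥ a. Then Su_{μ,A}(H∘f) ≥ min(H(p), p). -/
open scoped ENNReal
open Set

variable {X : Type*}

theorem stmt3 [MeasurableSpace X] (μ : Set X → ℝ≥0∞) (A : Set X) (hA : MeasurableSet A)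
    (hμ0 : μ ∅ = 0)
    (hμmono : ∀ B C : Set X, MeasurableSet B → MeasurableSet C → B ⊆ C → μ B ≤ μ C)
    (f : X → ℝ) (hf : Measurable f) (hfpos : ∀ x, 0 ≤ f x)
    (H : ℝ → ℝ) (hHpos : ∀ y ∈ Ici (0 : ℝ), 0 ≤ H y)
    (hHconv : ConvexOn ℝ (Ici (0 : ℝ)) H)
    (a : ℝ) (ha : 0 ≤ a) (hinf : ∀ y ∈ Ici (0 : ℝ), H a ≤ H y)
    (p : ℝ≥0∞) (hp : p = sugeno μ A (fun x => ENNReal.ofReal (f x)))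
    (hpfin : p ≠ ⊤) (hap : ENNReal.ofReal a ≤ p) :
    min (ENNReal.ofReal (H p.toReal)) p
      ≤ sugeno μ A (fun x => ENNReal.ofReal (H (f x))) := by
  -- H is nondecreasing on [a, ∞)
  have hHmono : ∀ u v : ℝ, a ≤ u → u ≤ v → H u ≤ H v := by
    intro u v hau huv
    rcases eq_or_lt_of_le hau with rfl | hau'
    · exact hinf v (le_trans ha huv)
    · rcases eq_or_lt_of_le huv with rfl | huv'
      · exact le_refl _
      · have h0u : (0:ℝ) ≤ u := ha.trans hau
        have h0v : (0:ℝ) ≤ v := h0u.trans huv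
        have hva : 0 < v - a := by linarith
        set l : ℝ := (u - a) / (v - a) with hl
        have hl0 : 0 < l := div_pos (by linarith) hva
        have hl1 : l < 1 := (div_lt_one hva).2 (by linarith)
        have hcomb : (1 - l) • a + l • v = u := by
          field_simp [hl, smul_eq_mul]
          have hlv : l * (v - a) = u - a := by rw [hl]; exact div_mul_cancel₀ _ hva.ne'
          linear_combination hlv
        have := hHconv.2 (mem_Ici.2 ha) (mem_Ici.2 h0v)
          (by linarith : (0:ℝ) ≤ 1 - l) hl0.le (by ring)
        rw [hcomb] at this
        simp only [smul_eq_mul] at this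
        have hHa : H a ≤ H u := hinf u h0u
        have hmul : (1 - l) * H a ≤ (1 - l) * H u :=
          mul_le_mul_of_nonneg_left hHa (by linarith)
        have key : l * H u ≤ l * H v := by linarith
        exact le_of_mul_le_mul_left key hl0
  -- measurability of superlevel sets of H ∘ f
  have hmeasf : ∀ s : ℝ≥0∞, MeasurableSet (A ∩ {x | s ≤ ENNReal.ofReal (f x)}) := by
    intro s
    exact hA.inter ((ENNReal.measurable_ofReal.comp hf) measurableSet_Ici)
  have hmeasC : ∀ r : ℝ, 0 ≤ r →
      MeasurableSet {x | ENNReal.ofReal (H r) ≤ ENNReal.ofReal (H (f x))} := by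
    intro r hr
    have hset : {x | ENNReal.ofReal (H r) ≤ ENNReal.ofReal (H (f x))}
        = f ⁻¹' (Ici 0 \ {y ∈ Ici (0:ℝ) | H y < H r}) := by
      ext x
      simp only [mem_setOf_eq, mem_preimage, mem_diff, mem_Ici, mem_sep_iff]
      rw [ENNReal.ofReal_le_ofReal_iff (hHpos _ (hfpos x))]
      constructor
      · intro h
        exact ⟨hfpos x, fun h2 => absurd h (not_le.mpr h2.2)⟩
      · rintro ⟨-, h⟩
        by_contra hc
        exact h ⟨hfpos x, not_le.mp hc⟩
    rw [hset]
    exact hf (measurableSet_Ici.diff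
      ((hHconv.convex_lt (H r)).ordConnected.measurableSet))
  refine le_of_forall_lt fun c hc => ?_
  have hc1 : c < ENNReal.ofReal (H p.toReal) := hc.trans_le (min_le_left _ _)
  have hc2 : c < p := hc.trans_le (min_le_right _ _)
  have hcT : c ≠ ⊤ := (hc2.trans_le le_top).ne_top
  rcases eq_or_lt_of_le hap with hpa | hpa
  · -- p = ofReal a : then H (f x) ≥ H a everywhere
    obtain ⟨s, hs⟩ := lt_iSup_iff.mp (by rw [hp, sugeno] at hc2; exact hc2)
    have hμA : c < μ A :=
      lt_of_lt_of_le (hs.trans_le (min_le_right _ _))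
        (hμmono _ _ (hmeasf s) hA inter_subset_left)
    have hptr : p.toReal = a := by
      rw [← hpa, ENNReal.toReal_ofReal ha]
    refine lt_of_lt_of_le ?_ (le_iSup
      (fun t => min t (μ (A ∩ {x | t ≤ ENNReal.ofReal (H (f x))})))
      (ENNReal.ofReal (H a)))
    have hset : A ∩ {x | ENNReal.ofReal (H a) ≤ ENNReal.ofReal (H (f x))} = A := by
      refine inter_eq_left.2 fun x _ => ?_
      exact ENNReal.ofReal_le_ofReal (hinf _ (hfpos x))
    rw [hset]
    exact lt_min (by rwa [hptr] at hc1) hμA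
  · -- ofReal a < p
    have hp0 : (0:ℝ≥0∞) < p := lt_of_le_of_lt (by positivity) hpa
    have hptr0 : 0 < p.toReal := ENNReal.toReal_pos hp0.ne' hpfin
    have hapr : a < p.toReal := by
      have := ENNReal.toReal_lt_toReal ENNReal.ofReal_ne_top hpfin |>.2 hpa
      rwa [ENNReal.toReal_ofReal ha] at this
    have hcpr : c.toReal < p.toReal :=
      (ENNReal.toReal_lt_toReal hcT hpfin).2 hc2
    have hcHr : c.toReal < H p.toReal :=
      (ENNReal.lt_ofReal_iff_toReal_lt hcT).1 hc1
    -- continuity of H at p.toReal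
    have hconvIoi : ConvexOn ℝ (Ioi (0:ℝ)) H :=
      hHconv.subset Ioi_subset_Ici_self (convex_Ioi 0)
    have hcont : ContinuousAt H p.toReal :=
      (hconvIoi.continuousOn isOpen_Ioi).continuousAt (Ioi_mem_nhds hptr0)
    have h1 : ∀ᶠ r in nhdsWithin p.toReal (Iio p.toReal), c.toReal < H r :=
      (hcont.eventually (eventually_gt_nhds hcHr)).filter_mono nhdsWithin_le_nhds
    have h2 : Ioo (max a c.toReal) p.toReal ∈ nhdsWithin p.toReal (Iio p.toReal) :=
      Ioo_mem_nhdsLT_of_mem ⟨max_lt hapr hcpr, le_refl _⟩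
    obtain ⟨r, hr1, hr2⟩ := (h1.and h2).exists
    obtain ⟨hrH, hrlo, hrhi⟩ : c.toReal < H r ∧ max a c.toReal < r ∧ r < p.toReal :=
      ⟨hr1, hr2.1, hr2.2⟩
    have har : a ≤ r := (le_max_left _ _).trans hrlo.le
    have hr0 : (0:ℝ) ≤ r := ha.trans har
    set t := ENNReal.ofReal (H r) with ht
    set q := ENNReal.ofReal r with hq
    have hct : c < t := (ENNReal.lt_ofReal_iff_toReal_lt hcT).2 hrH
    have hqp : q < p := (ENNReal.ofReal_lt_iff_lt_toReal hr0 hpfin).2 hrhi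
    have hmp : max q c < p := max_lt hqp hc2
    obtain ⟨s, hs⟩ := lt_iSup_iff.mp (by rw [hp, sugeno] at hmp; exact hmp)
    have hqs : q ≤ s := le_of_lt (lt_of_le_of_lt (le_max_left _ _)
      (hs.trans_le (min_le_left _ _)))
    have hcs : c < μ (A ∩ {x | s ≤ ENNReal.ofReal (f x)}) :=
      lt_of_le_of_lt (le_max_right _ _) (hs.trans_le (min_le_right _ _))
    have hsub1 : A ∩ {x | s ≤ ENNReal.ofReal (f x)}
        ⊆ A ∩ {x | q ≤ ENNReal.ofReal (f x)} :=
      inter_subset_inter_right _ fun x hx => le_trans hqs hx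
    have hcq : c < μ (A ∩ {x | q ≤ ENNReal.ofReal (f x)}) :=
      lt_of_lt_of_le hcs (hμmono _ _ (hmeasf s) (hmeasf q) hsub1)
    have hsub2 : A ∩ {x | q ≤ ENNReal.ofReal (f x)}
        ⊆ A ∩ {x | t ≤ ENNReal.ofReal (H (f x))} := by
      refine inter_subset_inter_right _ fun x hx => ?_
      have hrf : r ≤ f x := (ENNReal.ofReal_le_ofReal_iff (hfpos x)).1 hx
      exact ENNReal.ofReal_le_ofReal (hHmono r (f x) har hrf)
    have hmeasCt : MeasurableSet (A ∩ {x | t ≤ ENNReal.ofReal (H (f x))}) :=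
      hA.inter (hmeasC r hr0)
    have hcC : c < μ (A ∩ {x | t ≤ ENNReal.ofReal (H (f x))}) :=
      lt_of_lt_of_le hcq (hμmono _ _ (hmeasf q) hmeasCt hsub2)
    refine lt_of_lt_of_le (lt_min hct hcC) (le_iSup
      (fun t => min t (μ (A ∩ {x | t ≤ ENNReal.ofReal (H (f x))}))) t)
end

section
/- Let μ be a monotone measure with μ(A) < ∞, f : X → [0,∞) measurable, and H : [0,∞) → [0,∞) nondecreasing and left-continuous at p = Su_{μ,A}(f). Then the Shilkret integral satisfies Sh_{μ,A}(H∘f) := sup_{t≥0} t · μ(A ∩ {H(f) ≥ t}) ≥ H(p)·p. -/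
open scoped ENNReal
open Set Filter Topology

variable {X : Type*}

/-- The Shilkret integral. -/
noncomputable def shilkret (μ : Set X → ℝ≥0∞) (A : Set X) (f : X → ℝ≥0∞) : ℝ≥0∞ :=
  ⨆ t : ℝ≥0∞, t * μ (A ∩ {x | t ≤ f x})

theorem stmt4 [MeasurableSpace X] (μ : Set X → ℝ≥0∞) (A : Set X) (hA : MeasurableSet A)
    (hμ0 : μ ∅ = 0)
    (hμmono : ∀ B C : Set X, MeasurableSet B → MeasurableSet C → B ⊆ C → μ B ≤ μ C)
    (hμA : μ A ≠ ⊤)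
    (f : X → ℝ) (hf : Measurable f) (hfpos : ∀ x, 0 ≤ f x)
    (H : ℝ → ℝ) (hHpos : ∀ y ∈ Ici (0 : ℝ), 0 ≤ H y)
    (hHmono : MonotoneOn H (Ici (0 : ℝ)))
    (p : ℝ≥0∞) (hp : p = sugeno μ A (fun x => ENNReal.ofReal (f x)))
    (hHlc : ContinuousWithinAt H (Iio p.toReal) p.toReal) :
    ENNReal.ofReal (H p.toReal) * p
      ≤ shilkret μ A (fun x => ENNReal.ofReal (H (f x))) := by
  -- G : monotone extension of H
  set G : ℝ → ℝ := fun z => H (max z 0) with hG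
  have hGmono : Monotone G := fun a b hab =>
    hHmono (le_max_right a 0) (le_max_right b 0) (max_le_max hab le_rfl)
  have hGf : ∀ x, G (f x) = H (f x) := fun x => by
    simp [hG, max_eq_left (hfpos x)]
  -- p is finite
  have hple : p ≤ μ A := by
    rw [hp, sugeno]
    refine iSup_le fun t => ?_
    refine le_trans (min_le_right _ _) (hμmono _ _ ?_ hA inter_subset_left)
    exact hA.inter (measurableSet_le measurable_const (ENNReal.measurable_ofReal.comp hf))
  have hpfin : p ≠ ⊤ := fun h => hμA (top_le_iff.mp (h ▸ hple))
  rcases eq_or_ne p 0 with hp0 | hp0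
  · simp [hp0]
  have hr : 0 < p.toReal := ENNReal.toReal_pos hp0 hpfin
  set r := p.toReal with hrdef
  -- key bound for y ∈ (0, r)
  have key : ∀ y : ℝ, 0 < y → y < r →
      ENNReal.ofReal (H y) * ENNReal.ofReal y
        ≤ shilkret μ A (fun x => ENNReal.ofReal (H (f x))) := by
    intro y hy0 hyr
    have hylt : ENNReal.ofReal y < p := by
      rw [ENNReal.ofReal_lt_iff_lt_toReal hy0.le hpfin]; exact hyr
    rw [hp, sugeno, lt_iSup_iff] at hylt
    obtain ⟨t, ht⟩ := hylt
    have ht1 : ENNReal.ofReal y < t := lt_of_lt_of_le ht (min_le_left _ _)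
    have ht2 : ENNReal.ofReal y < μ (A ∩ {x | t ≤ ENNReal.ofReal (f x)}) :=
      lt_of_lt_of_le ht (min_le_right _ _)
    -- superlevel set of H ∘ f
    set T : Set X := A ∩ {x | ENNReal.ofReal (H y) ≤ ENNReal.ofReal (H (f x))} with hT
    have hTmeas : MeasurableSet T := by
      have : MeasurableSet {x | ENNReal.ofReal (H y) ≤ ENNReal.ofReal (G (f x))} :=
        measurableSet_le measurable_const
          (ENNReal.measurable_ofReal.comp (hGmono.measurable.comp hf))
      have hEq : {x | ENNReal.ofReal (H y) ≤ ENNReal.ofReal (G (f x))}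
          = {x | ENNReal.ofReal (H y) ≤ ENNReal.ofReal (H (f x))} := by
        ext x; simp [hGf x]
      exact hA.inter (hEq ▸ this)
    have hsub : A ∩ {x | t ≤ ENNReal.ofReal (f x)} ⊆ T := by
      rintro x ⟨hxA, hxf⟩
      refine ⟨hxA, ?_⟩
      have hyfx : y ≤ f x := by
        have : ENNReal.ofReal y < ENNReal.ofReal (f x) := lt_of_lt_of_le ht1 hxf
        exact le_of_lt ((ENNReal.ofReal_lt_ofReal_iff_of_nonneg hy0.le).mp this)
      exact ENNReal.ofReal_le_ofReal (hHmono hy0.le (le_trans hy0.le hyfx) hyfx)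
    have hμT : ENNReal.ofReal y ≤ μ T := by
      refine le_trans ht2.le (hμmono _ _ ?_ hTmeas hsub)
      exact hA.inter (measurableSet_le measurable_const (ENNReal.measurable_ofReal.comp hf))
    calc ENNReal.ofReal (H y) * ENNReal.ofReal y
        ≤ ENNReal.ofReal (H y) * μ T := by gcongr
      _ ≤ shilkret μ A (fun x => ENNReal.ofReal (H (f x))) := le_iSup
          (fun t : ℝ≥0∞ => t * μ (A ∩ {x | t ≤ ENNReal.ofReal (H (f x))}))
          (ENNReal.ofReal (H y))
  -- take limit y → r⁻
  have hNB : (𝓝[<] r).NeBot := nhdsLT_neBot r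
  have htend : Filter.Tendsto (fun y => ENNReal.ofReal (H y) * ENNReal.ofReal y)
      (𝓝[<] r) (𝓝 (ENNReal.ofReal (H r) * p)) := by
    have h1 : Filter.Tendsto (fun y => ENNReal.ofReal (H y)) (𝓝[<] r)
        (𝓝 (ENNReal.ofReal (H r))) :=
      (ENNReal.continuous_ofReal.tendsto _).comp hHlc
    have h2 : Filter.Tendsto (fun y : ℝ => ENNReal.ofReal y) (𝓝[<] r)
        (𝓝 (ENNReal.ofReal r)) :=
      ((ENNReal.continuous_ofReal.tendsto _).comp
        (Filter.tendsto_id.mono_left nhdsWithin_le_nhds))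
    have hor : ENNReal.ofReal r = p := ENNReal.ofReal_toReal hpfin
    rw [← hor]
    exact ENNReal.Tendsto.mul h1 (Or.inr (hor ▸ hpfin)) h2
      (Or.inr ENNReal.ofReal_ne_top)
  refine le_of_tendsto htend ?_
  filter_upwards [Ioo_mem_nhdsLT_of_mem (show r ∈ Ioc (0:ℝ) r from ⟨hr, le_rfl⟩)]
    with y hy
  exact key y hy.1 hy.2
end

section
/- Let ∘ : [0,∞]×[0,∞] → [0,∞] be nondecreasing with a∘0 = 0 for all a and x ↦ x∘y right-continuous for each fixed y. Let μ be a monotone measure, f : X → [0,∞] measurable, H : [0,∞] → [0,∞] with H∘f measurable, and p = Su_{μ,A}(f) < ∞. Then I_{∘,μ,A}(H(f)) ≤ max( (max(H(p⁺), sup H([0,p])) ∘ μ(A)), ((sup H) ∘ p) ), where H(p⁺) = lim_{ε→0} sup H((p, p+ε)). -/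
open scoped ENNReal
open Set

variable {X : Type*}

/-- Upper right-hand limit of `H` at `p`: `lim_{ε→0} sup H((p,p+ε))`. -/
noncomputable def upperRightLim (H : ℝ≥0∞ → ℝ≥0∞) (p : ℝ≥0∞) : ℝ≥0∞ :=
  ⨅ q ∈ Ioi p, ⨆ y ∈ Ioo p q, H y

theorem stmt8 [MeasurableSpace X] (μ : Set X → ℝ≥0∞) (A : Set X) (hA : MeasurableSet A)
    (hμ0 : μ ∅ = 0)
    (hμmono : ∀ B C : Set X, MeasurableSet B → MeasurableSet C → B ⊆ C → μ B ≤ μ C)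
    (op : ℝ≥0∞ → ℝ≥0∞ → ℝ≥0∞)
    (hop : ∀ a b c d : ℝ≥0∞, a ≤ c → b ≤ d → op a b ≤ op c d)
    (hop0 : ∀ a : ℝ≥0∞, op a 0 = 0)
    (hrc : ∀ y x : ℝ≥0∞, ContinuousWithinAt (fun a => op a y) (Ioi x) x)
    (f : X → ℝ≥0∞) (hf : Measurable f)
    (H : ℝ≥0∞ → ℝ≥0∞) (hHf : Measurable (H ∘ f))
    (p : ℝ≥0∞) (hp : p = sugeno μ A f) (hpfin : p ≠ ⊤) :
    gSugeno op μ A (H ∘ f)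
      ≤ max (op (max (upperRightLim H p) (⨆ y ∈ Icc 0 p, H y)) (μ A))
            (op (⨆ y : ℝ≥0∞, H y) p) := by
  rw [gSugeno]
  refine iSup_le fun t => ?_
  set M := max (upperRightLim H p) (⨆ y ∈ Icc 0 p, H y) with hM
  by_cases ht : t ≤ M
  · refine le_max_of_le_left (hop _ _ _ _ ht ?_)
    exact hμmono _ _ (hA.inter (hHf measurableSet_Ici)) hA inter_subset_left
  push_neg at ht
  have h1 : upperRightLim H p < t := lt_of_le_of_lt (le_max_left _ _) ht
  rw [upperRightLim] at h1
  simp only [iInf_lt_iff] at h1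
  obtain ⟨q, hq, hsup⟩ := h1
  have hq : p < q := hq
  have hsub : {x | t ≤ (H ∘ f) x} ⊆ {x | q ≤ f x} := by
    intro x hx
    have hxt : t ≤ H (f x) := hx
    have hfp : p < f x := by
      by_contra hle
      push_neg at hle
      have : H (f x) ≤ ⨆ y ∈ Icc 0 p, H y :=
        le_biSup _ (mem_Icc.2 ⟨zero_le, hle⟩)
      exact absurd (le_trans hxt (this.trans (le_max_right _ _))) (not_le.2 ht)
    simp only [mem_setOf_eq]
    by_contra hlt
    push_neg at hlt
    have : H (f x) ≤ ⨆ y ∈ Ioo p q, H y := le_biSup _ ⟨hfp, hlt⟩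
    exact absurd (le_trans hxt this) (not_le.2 hsup)
  have hμp : μ (A ∩ {x | q ≤ f x}) ≤ p := by
    have hle : min q (μ (A ∩ {x | q ≤ f x})) ≤ sugeno μ A f := le_iSup (fun t => min t (μ (A ∩ {x | t ≤ f x}))) q
    rw [← hp] at hle
    rcases min_le_iff.1 hle with h | h
    · exact absurd h (not_le.2 hq)
    · exact h
  by_cases hts : t ≤ ⨆ y : ℝ≥0∞, H y
  · refine le_max_of_le_right (hop _ _ _ _ hts ?_)
    refine le_trans (hμmono _ _ (hA.inter (hHf measurableSet_Ici))
      (hA.inter (hf measurableSet_Ici)) (inter_subset_inter_right _ hsub)) hμp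
  · have hempty : A ∩ {x | t ≤ (H ∘ f) x} = ∅ := by
      ext x
      simp only [mem_inter_iff, mem_setOf_eq, mem_empty_iff_false, iff_false, not_and]
      intro _ hxt
      exact hts (le_trans hxt (le_iSup _ (f x)))
    rw [hempty, hμ0, hop0]
    exact zero_le
end

section
/- Let ∘ be nondecreasing with a∘0 = 0 and x ↦ x∘y right-continuous for fixed y. Let μ be a monotone measure that is weakly superadditive on A (μ(A) ≥ μ(A∩B) + μ(A∩Bᶜ) for all B), f : X → [0,∞] measurable, H : [0,∞] → [0,∞] with H∘f measurable, and p = Su_{μ,A}(f) < ∞. Then I_{∘,μ,A}(H(f)) ≤ max( (max(H(p⁻), sup H([p,∞])) ∘ μ(A)), ((sup H) ∘ (μ(A) − p)) ), where H(p⁻) = lim_{ε→0} sup H((p−ε,p)) with H(0⁻)=0. -/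
open scoped ENNReal
open Set

variable {X : Type*}

/-- Upper left-hand limit of `H` at `p`: `lim_{ε→0} sup H((p-ε,p))`, with value `0` at `p = 0`. -/
noncomputable def upperLeftLim (H : ℝ≥0∞ → ℝ≥0∞) (p : ℝ≥0∞) : ℝ≥0∞ :=
  if p = 0 then 0 else ⨅ q ∈ Iio p, ⨆ y ∈ Ioo q p, H y

theorem stmt9 [MeasurableSpace X] (μ : Set X → ℝ≥0∞) (A : Set X) (hA : MeasurableSet A)
    (hμ0 : μ ∅ = 0)
    (hμmono : ∀ B C : Set X, MeasurableSet B → MeasurableSet C → B ⊆ C → μ B ≤ μ C)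
    (hμwsup : ∀ B : Set X, MeasurableSet B → μ (A ∩ B) + μ (A ∩ Bᶜ) ≤ μ A)
    (op : ℝ≥0∞ → ℝ≥0∞ → ℝ≥0∞)
    (hop : ∀ a b c d : ℝ≥0∞, a ≤ c → b ≤ d → op a b ≤ op c d)
    (hop0 : ∀ a : ℝ≥0∞, op a 0 = 0)
    (hrc : ∀ y x : ℝ≥0∞, ContinuousWithinAt (fun a => op a y) (Ioi x) x)
    (f : X → ℝ≥0∞) (hf : Measurable f)
    (H : ℝ≥0∞ → ℝ≥0∞) (hHf : Measurable (H ∘ f))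
    (p : ℝ≥0∞) (hp : p = sugeno μ A f) (hpfin : p ≠ ⊤) :
    gSugeno op μ A (H ∘ f)
      ≤ max (op (max (upperLeftLim H p) (⨆ y ∈ Ici p, H y)) (μ A))
            (op (⨆ y : ℝ≥0∞, H y) (μ A - p)) := by
  -- key: for all s < p, μ (A ∩ {f ≥ s}) ≥ p
  have key : ∀ s, s < p → p ≤ μ (A ∩ {x | s ≤ f x}) := by
    intro s hs
    by_contra hlt
    push_neg at hlt
    have hle : sugeno μ A f ≤ max s (μ (A ∩ {x | s ≤ f x})) := by
      apply iSup_le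
      intro t'
      rcases le_total t' s with h | h
      · exact le_max_of_le_left ((min_le_left _ _).trans h)
      · refine le_max_of_le_right ((min_le_right _ _).trans
          (hμmono _ _ (hA.inter (hf measurableSet_Ici)) (hA.inter (hf measurableSet_Ici)) ?_))
        exact inter_subset_inter_right _ (fun x hx => h.trans hx)
    rw [← hp] at hle
    exact absurd hle (not_le.mpr (max_lt hs hlt))
  rw [gSugeno]
  apply iSup_le
  intro t
  set Bt : Set X := {x | t ≤ (H ∘ f) x} with hBdef
  have hBmeas : MeasurableSet Bt := hHf measurableSet_Ici
  by_cases hE : (A ∩ Bt).Nonempty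
  swap
  · rw [not_nonempty_iff_eq_empty] at hE
    rw [hE, hμ0, hop0]
    exact zero_le
  set M1 : ℝ≥0∞ := max (upperLeftLim H p) (⨆ y ∈ Ici p, H y) with hM1
  by_cases ht : t ≤ M1
  · exact le_max_of_le_left
      (hop t (μ (A ∩ Bt)) M1 (μ A) ht
        (hμmono _ _ (hA.inter hBmeas) hA inter_subset_left))
  · push_neg at ht
    obtain ⟨x0, hx0A, hx0B⟩ := hE
    have hsupIci : (⨆ y ∈ Ici p, H y) < t := lt_of_le_of_lt (le_max_right _ _) ht
    have hIci : ∀ y, p ≤ y → H y < t := by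
      intro y hy
      exact lt_of_le_of_lt (le_biSup _ hy) hsupIci
    have hp0 : p ≠ 0 := by
      intro h0
      exact absurd (hx0B : t ≤ H (f x0)) (not_le.mpr (hIci (f x0) (h0 ▸ (zero_le : (0:ℝ≥0∞) ≤ f x0))))
    have hull : upperLeftLim H p < t := lt_of_le_of_lt (le_max_left _ _) ht
    rw [upperLeftLim, if_neg hp0] at hull
    -- extract q < p with sup over Ioo q p < t
    obtain ⟨q, hq⟩ := iInf_lt_iff.mp hull
    have hqp : q ∈ Iio p := by
      by_contra hnq
      simp [hnq] at hq
    rw [iInf_pos hqp] at hq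
    have hIoo : ∀ y, q < y → y < p → H y < t := by
      intro y h1 h2
      exact lt_of_le_of_lt (le_biSup H (show y ∈ Ioo q p from ⟨h1, h2⟩)) hq
    -- Bt ⊆ {f ≤ q}
    have hBsub : ∀ x ∈ Bt, f x ≤ q := by
      intro x hx
      by_contra hgt
      push_neg at hgt
      rcases lt_or_ge (f x) p with h | h
      · exact absurd (hx : t ≤ H (f x)) (not_le.mpr (hIoo _ hgt h))
      · exact absurd (hx : t ≤ H (f x)) (not_le.mpr (hIci _ h))
    obtain ⟨s, hqs, hsp⟩ := exists_between (show q < p from hqp)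
    have h1 : p ≤ μ (A ∩ {x | s ≤ f x}) := key s hsp
    have h2 : A ∩ {x | s ≤ f x} ⊆ A ∩ Btᶜ := by
      rintro x ⟨hxA, hxs⟩
      refine ⟨hxA, fun hxB => ?_⟩
      exact absurd (lt_of_lt_of_le hqs hxs) (not_lt.mpr (hBsub x hxB))
    have h3 : p ≤ μ (A ∩ Btᶜ) :=
      h1.trans (hμmono _ _ (hA.inter (hf measurableSet_Ici)) (hA.inter hBmeas.compl) h2)
    have h4 : μ (A ∩ Bt) + p ≤ μ A :=
      (add_le_add_right h3 _).trans (hμwsup Bt hBmeas)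
    have h5 : μ (A ∩ Bt) ≤ μ A - p := ENNReal.le_sub_of_add_le_right hpfin h4
    have h6 : t ≤ ⨆ y : ℝ≥0∞, H y := le_trans hx0B (le_iSup _ (f x0))
    exact le_max_of_le_right (hop t _ _ _ h6 h5)
end

section
/- Let H : [0,∞] → [0,∞] be continuous, increasing on [0,c] and decreasing on [c,∞], with c ∈ [a,b] ⊆ [0,∞). Let μ be a monotone measure, f : X → [a,b] measurable, and p = Su_{μ,A}(f) ≤ c. Then Su_{μ,A}(H∘f) ≤ min( max(H(p), p), H(c), μ(A) ). -/
open scoped ENNReal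
open Set

variable {X : Type*}

theorem stmt10 [MeasurableSpace X] (μ : Set X → ℝ≥0∞) (A : Set X) (hA : MeasurableSet A)
    (hμ0 : μ ∅ = 0)
    (hμmono : ∀ B C : Set X, MeasurableSet B → MeasurableSet C → B ⊆ C → μ B ≤ μ C)
    (H : ℝ≥0∞ → ℝ≥0∞) (hHcont : Continuous H)
    (a b c : ℝ≥0∞) (hb : b ≠ ⊤) (hc : c ∈ Icc a b)
    (hHinc : StrictMonoOn H (Icc 0 c)) (hHdec : StrictAntiOn H (Ici c))
    (f : X → ℝ≥0∞) (hf : Measurable f) (hfab : ∀ x, f x ∈ Icc a b)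
    (p : ℝ≥0∞) (hp : p = sugeno μ A f) (hpc : p ≤ c) :
    sugeno μ A (H ∘ f) ≤ min (min (max (H p) p) (H c)) (μ A) := by
  have Hmax : ∀ y : ℝ≥0∞, H y ≤ H c := by
    intro y
    rcases le_total y c with h | h
    · exact hHinc.monotoneOn ⟨zero_le, h⟩ ⟨zero_le, le_rfl⟩ h
    · exact hHdec.antitoneOn (self_mem_Ici) h h
  have key : ∀ s : ℝ≥0∞, p < s → μ (A ∩ {x | s ≤ f x}) ≤ p := by
    intro s hs
    by_contra h
    push_neg at h
    have h1 : min s (μ (A ∩ {x | s ≤ f x})) ≤ p := hp ▸ le_iSup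
      (fun t => min t (μ (A ∩ {x | t ≤ f x}))) s
    have : p < min s (μ (A ∩ {x | s ≤ f x})) := lt_min hs h
    exact absurd (this.trans_le h1) (lt_irrefl p)
  have hmeas : ∀ t : ℝ≥0∞, MeasurableSet (A ∩ {x | t ≤ H (f x)}) := fun t =>
    hA.inter ((hHcont.measurable.comp hf) measurableSet_Ici)
  refine le_min (le_min ?_ ?_) ?_ <;> rw [sugeno] <;> simp only [Function.comp] <;> refine iSup_le fun t => ?_
  · -- ≤ max (H p) p
    rcases le_or_gt t (H p) with ht | ht
    · exact (min_le_left _ _).trans (ht.trans (le_max_left _ _))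
    rcases le_or_gt t (H c) with htc | htc
    · -- IVT produces s ∈ (p, c] with H s = t
      obtain ⟨s, hsmem, hHs⟩ := intermediate_value_Icc hpc hHcont.continuousOn
        ⟨ht.le, htc⟩
      have hps : p < s := by
        rcases eq_or_lt_of_le hsmem.1 with h | h
        · exact absurd (hHs ▸ ht) (by rw [← h]; exact lt_irrefl _)
        · exact h
      have hsub : A ∩ {x | t ≤ H (f x)} ⊆ A ∩ {x | s ≤ f x} := by
        rintro x ⟨hxA, hx⟩
        refine ⟨hxA, ?_⟩
        rcases le_or_gt (f x) c with hfc | hfc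
        · by_contra hlt
          rw [mem_setOf_eq, not_le] at hlt
          have : H (f x) < H s := hHinc ⟨zero_le, hfc⟩ ⟨zero_le, hsmem.2⟩ hlt
          exact absurd (hHs ▸ hx : H s ≤ H (f x)) this.not_ge
        · exact hsmem.2.trans hfc.le
      have : μ (A ∩ {x | t ≤ H (f x)}) ≤ p :=
        (hμmono _ _ (hmeas t) (hA.inter (hf measurableSet_Ici)) hsub).trans (key s hps)
      exact (min_le_right _ _).trans (this.trans (le_max_right _ _))
    · -- t > H c : the level set is empty
      have hempty : A ∩ {x | t ≤ H (f x)} = ∅ := by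
        ext x
        simp only [mem_inter_iff, mem_setOf_eq, mem_empty_iff_false, iff_false, not_and]
        intro _ hx
        exact absurd (hx.trans (Hmax (f x))) htc.not_ge
      rw [hempty, hμ0]
      simp
  · -- ≤ H c
    rcases le_or_gt t (H c) with ht | ht
    · exact (min_le_left _ _).trans ht
    · have hempty : A ∩ {x | t ≤ H (f x)} = ∅ := by
        ext x
        simp only [mem_inter_iff, mem_setOf_eq, mem_empty_iff_false, iff_false, not_and]
        intro _ hx
        exact absurd (hx.trans (Hmax (f x))) ht.not_ge
      rw [hempty, hμ0]
      simp
  · -- ≤ μ A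
    exact (min_le_right _ _).trans (hμmono _ A (hmeas t) hA inter_subset_left)
end

section
/- Let H : [0,∞] → [0,∞] be continuous, increasing on [0,c] and decreasing on [c,∞], c ∈ [a,b] ⊆ [0,∞). Let μ be a monotone measure weakly superadditive on A, f : X → [a,b] measurable, and p = Su_{μ,A}(f) with c < p < ∞. Then Su_{μ,A}(H∘f) ≤ min( max(H(p), μ(A) − p), H(c), μ(A) ). -/
open scoped ENNReal
open Set

variable {X : Type*}

theorem stmt11 [MeasurableSpace X] (μ : Set X → ℝ≥0∞) (A : Set X) (hA : MeasurableSet A)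
    (hμ0 : μ ∅ = 0)
    (hμmono : ∀ B C : Set X, MeasurableSet B → MeasurableSet C → B ⊆ C → μ B ≤ μ C)
    (hμwsup : ∀ B : Set X, MeasurableSet B → μ (A ∩ B) + μ (A ∩ Bᶜ) ≤ μ A)
    (H : ℝ≥0∞ → ℝ≥0∞) (hHcont : Continuous H)
    (a b c : ℝ≥0∞) (hb : b ≠ ⊤) (hc : c ∈ Icc a b)
    (hHinc : StrictMonoOn H (Icc 0 c)) (hHdec : StrictAntiOn H (Ici c))
    (f : X → ℝ≥0∞) (hf : Measurable f) (hfab : ∀ x, f x ∈ Icc a b)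
    (p : ℝ≥0∞) (hp : p = sugeno μ A f) (hcp : c < p) (hpfin : p ≠ ⊤) :
    sugeno μ A (H ∘ f) ≤ min (min (max (H p) (μ A - p)) (H c)) (μ A) := by
  have hfm : ∀ s : ℝ≥0∞, MeasurableSet {x | s ≤ f x} :=
    fun s => measurableSet_le measurable_const hf
  have hg : Measurable (H ∘ f) := hHcont.measurable.comp hf
  have hgm : ∀ s : ℝ≥0∞, MeasurableSet {x | s ≤ (H ∘ f) x} :=
    fun s => measurableSet_le measurable_const hg
  -- key lemma: below the Sugeno value, level sets have large measure
  have key : ∀ s, s < p → s ≤ μ (A ∩ {x | s ≤ f x}) := by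
    intro s hs
    by_contra hcon
    push_neg at hcon
    have hps : p ≤ s := by
      rw [hp, sugeno]
      refine iSup_le fun t => ?_
      rcases le_or_gt t s with h | h
      · exact le_trans (min_le_left _ _) h
      · refine le_trans (min_le_right _ _) ?_
        refine le_trans (hμmono _ _ (hA.inter (hfm t)) (hA.inter (hfm s))
          (inter_subset_inter_right _ fun x hx => le_trans h.le hx)) hcon.le
    exact absurd hs (not_lt.2 hps)
  have hHmax : ∀ s : ℝ≥0∞, H s ≤ H c := by
    intro s
    rcases le_total s c with h | h
    · exact hHinc.monotoneOn ⟨zero_le, h⟩ ⟨zero_le, le_refl c⟩ h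
    · exact hHdec.antitoneOn self_mem_Ici h h
  rw [sugeno]
  refine iSup_le fun t => ?_
  refine le_min (le_min ?_ ?_) ?_
  · -- bound by max (H p) (μ A - p)
    rcases le_or_gt t (H p) with h | h
    · exact le_max_of_le_left (le_trans (min_le_left _ _) h)
    · refine le_max_of_le_right ?_
      refine ENNReal.le_sub_of_add_le_right hpfin ?_
      set S := A ∩ {x | t ≤ (H ∘ f) x} with hS
      have main : ∀ t' < p, min t (μ S) + t' ≤ μ A := by
        intro t' ht'
        have hU : (H ⁻¹' Iio t) ∈ nhds p := (isOpen_Iio.preimage hHcont).mem_nhds h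
        obtain ⟨l, hl, hsub⟩ := exists_Ioc_subset_of_mem_nhds hU ⟨c, hcp⟩
        obtain ⟨t'', ht''1, ht''2⟩ :=
          exists_between (show max l (max t' c) < p from max_lt hl (max_lt ht' hcp))
        have hct'' : c < t'' :=
          lt_of_le_of_lt (le_trans (le_max_right _ _) (le_max_right _ _)) ht''1
        have ht't'' : t' ≤ t'' :=
          le_of_lt (lt_of_le_of_lt (le_trans (le_max_left _ _) (le_max_right _ _)) ht''1)
        have hHt'' : H t'' < t := hsub ⟨lt_of_le_of_lt (le_max_left _ _) ht''1, ht''2.le⟩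
        have hsubset : S ⊆ A ∩ {x | t'' ≤ f x}ᶜ := by
          refine inter_subset_inter_right _ fun x hx => ?_
          intro hfx
          have hle : H (f x) ≤ H t'' :=
            hHdec.antitoneOn (le_of_lt hct'') (le_trans hct''.le hfx) hfx
          exact absurd hx (not_le.2 (lt_of_le_of_lt hle hHt''))
        calc min t (μ S) + t'
            ≤ μ (A ∩ {x | t'' ≤ f x}ᶜ) + μ (A ∩ {x | t'' ≤ f x}) := by
              refine add_le_add ?_ (le_trans ht't'' (key t'' ht''2))
              exact le_trans (min_le_right _ _)
                (hμmono _ _ (hA.inter (hgm t)) (hA.inter (hfm t'').compl) hsubset)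
          _ = μ (A ∩ {x | t'' ≤ f x}) + μ (A ∩ {x | t'' ≤ f x}ᶜ) := add_comm _ _
          _ ≤ μ A := hμwsup _ (hfm t'')
      have hp0 : p ≠ 0 := by
        intro h0
        rw [h0] at hcp
        exact absurd hcp (not_lt.2 (zero_le (a := c)))
      refine ENNReal.le_of_forall_pos_le_add fun ε hε _ => ?_
      have hlt : p - ε < p :=
        ENNReal.sub_lt_self hpfin hp0 (by exact_mod_cast hε.ne')
      calc min t (μ S) + p ≤ min t (μ S) + ((p - ε) + ε) :=
            add_le_add_right le_tsub_add _
        _ = (min t (μ S) + (p - ε)) + ε := by ring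
        _ ≤ μ A + ε := add_le_add_left (main _ hlt) _
  · -- bound by H c
    rcases le_or_gt t (H c) with h | h
    · exact le_trans (min_le_left _ _) h
    · have hempty : A ∩ {x | t ≤ (H ∘ f) x} = ∅ := by
        refine eq_empty_of_forall_notMem fun x hx => ?_
        exact absurd (le_trans hx.2 (hHmax (f x))) (not_le.2 h)
      rw [hempty, hμ0]
      simp
  · -- bound by μ A
    exact le_trans (min_le_right _ _)
      (hμmono _ _ (hA.inter (hgm t)) hA inter_subset_left)
end

section
/- Let μ be a continuous monotone measure (continuous from below and from above), ∘ a nondecreasing binary map on [0,∞] with a∘0 = 0 for all a, f : X → [0,∞] measurable, H : [0,∞] → [0,∞] with H∘f measurable, and p = Su_{μ,A}(f) < ∞. Then I_{∘,μ,A}(H(f)) ≥ max( (inf H([p,∞])) ∘ p, (inf H) ∘ μ(A) ) and I_{∘,μ,A}(H(f)) ≤ max( (sup H([0,p])) ∘ μ(A), (sup H) ∘ p ). -/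
open scoped ENNReal
open Set

variable {X : Type*}

private lemma iInf_inv_nat_add_one : ⨅ n : ℕ, ((n:ℝ≥0∞)+1)⁻¹ = 0 := by
  refine le_antisymm ?_ zero_le
  by_contra h
  push_neg at h
  obtain ⟨n, hn⟩ := ENNReal.exists_inv_nat_lt (ne_of_gt h)
  have h2 : ⨅ n : ℕ, ((n:ℝ≥0∞)+1)⁻¹ ≤ ((n:ℝ≥0∞)+1)⁻¹ := iInf_le _ n
  have h3 : ((n:ℝ≥0∞)+1)⁻¹ ≤ (n:ℝ≥0∞)⁻¹ := ENNReal.inv_le_inv.mpr (le_add_right le_rfl)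
  exact (h2.trans h3).not_gt hn

theorem stmt12 [MeasurableSpace X] (μ : Set X → ℝ≥0∞) (A : Set X) (hA : MeasurableSet A)
    (hμ0 : μ ∅ = 0)
    (hμmono : ∀ B C : Set X, MeasurableSet B → MeasurableSet C → B ⊆ C → μ B ≤ μ C)
    (hμbelow : ∀ s : ℕ → Set X, (∀ n, MeasurableSet (s n)) → Monotone s →
      μ (⋃ n, s n) = ⨆ n, μ (s n))
    (hμabove : ∀ s : ℕ → Set X, (∀ n, MeasurableSet (s n)) → Antitone s →
      μ (⋂ n, s n) = ⨅ n, μ (s n))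
    (op : ℝ≥0∞ → ℝ≥0∞ → ℝ≥0∞)
    (hop : ∀ a b c d : ℝ≥0∞, a ≤ c → b ≤ d → op a b ≤ op c d)
    (hop0 : ∀ a : ℝ≥0∞, op a 0 = 0)
    (f : X → ℝ≥0∞) (hf : Measurable f)
    (H : ℝ≥0∞ → ℝ≥0∞) (hHf : Measurable (H ∘ f))
    (p : ℝ≥0∞) (hp : p = sugeno μ A f) (hpfin : p ≠ ⊤) :
    max (op (⨅ y ∈ Ici p, H y) p) (op (⨅ y : ℝ≥0∞, H y) (μ A))
        ≤ gSugeno op μ A (H ∘ f) ∧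
    gSugeno op μ A (H ∘ f)
        ≤ max (op (⨆ y ∈ Icc 0 p, H y) (μ A)) (op (⨆ y : ℝ≥0∞, H y) p) := by
  have hmeas : ∀ t : ℝ≥0∞, MeasurableSet (A ∩ {x | t ≤ f x}) :=
    fun t => hA.inter (hf measurableSet_Ici)
  have hmeasH : ∀ t : ℝ≥0∞, MeasurableSet (A ∩ {x | t ≤ (H ∘ f) x}) :=
    fun t => hA.inter (hHf measurableSet_Ici)
  -- each level below p has measure above the level
  have claim : ∀ t, t < p → t < μ (A ∩ {x | t ≤ f x}) := by
    intro t ht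
    rw [hp, sugeno] at ht
    obtain ⟨s, hs⟩ := lt_iSup_iff.mp ht
    have h1 : t < s := lt_of_lt_of_le hs (min_le_left _ _)
    have h2 : t < μ (A ∩ {x | s ≤ f x}) := lt_of_lt_of_le hs (min_le_right _ _)
    exact h2.trans_le (hμmono _ _ (hmeas s) (hmeas t)
      (inter_subset_inter_right _ fun x hx => le_trans h1.le hx))
  -- key1 : p ≤ μ (A ∩ {f ≥ p})
  have key1 : p ≤ μ (A ∩ {x | p ≤ f x}) := by
    rcases eq_or_ne p 0 with h0 | h0
    · simp [h0]
    · set t : ℕ → ℝ≥0∞ := fun n => p - ((n:ℝ≥0∞)+1)⁻¹ with htdef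
      have htmono : Monotone t := by
        intro n m hnm
        exact tsub_le_tsub_left (ENNReal.inv_le_inv.mpr
          (by norm_cast; omega)) p
      have htlt : ∀ n, t n < p := fun n =>
        ENNReal.sub_lt_self hpfin h0 (by simp)
      have hsup : ⨆ n, t n = p := by
        rw [htdef]
        simp only
        rw [← ENNReal.sub_iInf, iInf_inv_nat_add_one, tsub_zero]
      have hset : A ∩ {x | p ≤ f x} = ⋂ n, A ∩ {x | t n ≤ f x} := by
        ext x
        simp only [mem_inter_iff, mem_iInter, mem_setOf_eq]
        constructor
        · rintro ⟨hxA, hxf⟩ n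
          exact ⟨hxA, (htlt n).le.trans hxf⟩
        · intro h
          refine ⟨(h 0).1, ?_⟩
          rw [← hsup]
          exact iSup_le fun n => (h n).2
      have hanti : Antitone fun n => A ∩ {x | t n ≤ f x} := by
        intro n m hnm
        exact inter_subset_inter_right _ fun x hx => (htmono hnm).trans hx
      rw [hset, hμabove _ (fun n => hmeas _) hanti]
      rw [← hsup]
      refine iSup_le fun m => le_iInf fun n => ?_
      calc t m ≤ t (max m n) := htmono (le_max_left m n)
        _ ≤ μ (A ∩ {x | t (max m n) ≤ f x}) := (claim _ (htlt _)).le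
        _ ≤ μ (A ∩ {x | t n ≤ f x}) := hμmono _ _ (hmeas _) (hmeas _)
            (inter_subset_inter_right _ fun x hx => (htmono (le_max_right m n)).trans hx)
  -- key2 : μ (A ∩ {f > p}) ≤ p
  have key2 : μ (A ∩ {x | p < f x}) ≤ p := by
    set q : ℕ → ℝ≥0∞ := fun n => p + ((n:ℝ≥0∞)+1)⁻¹ with hqdef
    have hqgt : ∀ n, p < q n := fun n => ENNReal.lt_add_right hpfin (by simp)
    have hqanti : Antitone q := by
      intro n m hnm
      exact add_le_add_right (ENNReal.inv_le_inv.mpr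
        (by norm_cast; omega)) p
    have hinf : ⨅ n, q n = p := by
      rw [hqdef]
      simp only
      rw [← ENNReal.add_iInf, iInf_inv_nat_add_one, add_zero]
    have hset : A ∩ {x | p < f x} = ⋃ n, A ∩ {x | q n ≤ f x} := by
      ext x
      simp only [mem_inter_iff, mem_iUnion, mem_setOf_eq]
      constructor
      · rintro ⟨hxA, hxf⟩
        have : ⨅ n, q n < f x := hinf ▸ hxf
        obtain ⟨n, hn⟩ := iInf_lt_iff.mp this
        exact ⟨n, hxA, hn.le⟩
      · rintro ⟨n, hxA, hxf⟩
        exact ⟨hxA, (hqgt n).trans_le hxf⟩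
    have hmono : Monotone fun n => A ∩ {x | q n ≤ f x} := by
      intro n m hnm
      exact inter_subset_inter_right _ fun x hx => (hqanti hnm).trans hx
    rw [hset, hμbelow _ (fun n => hmeas _) hmono]
    refine iSup_le fun n => ?_
    have hle : min (q n) (μ (A ∩ {x | q n ≤ f x})) ≤ p := by
      rw [hp, sugeno]; exact le_iSup (fun s => min s (μ (A ∩ {x | s ≤ f x}))) (q n)
    rcases min_le_iff.mp hle with h | h
    · exact absurd h (not_le.mpr (hqgt n))
    · exact h
  constructor
  · -- lower bound
    refine max_le ?_ ?_
    · refine le_trans ?_ (le_iSup (fun t => op t (μ (A ∩ {x | t ≤ (H ∘ f) x})))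
        (⨅ y ∈ Ici p, H y))
      refine hop _ _ _ _ le_rfl ?_
      refine key1.trans (hμmono _ _ (hmeas p) (hmeasH _) ?_)
      rintro x ⟨hxA, hxf⟩
      refine ⟨hxA, ?_⟩
      show (⨅ y ∈ Ici p, H y) ≤ H (f x)
      exact iInf₂_le (f x) hxf
    · refine le_trans ?_ (le_iSup (fun t => op t (μ (A ∩ {x | t ≤ (H ∘ f) x})))
        (⨅ y : ℝ≥0∞, H y))
      have h : A ∩ {x | (⨅ y : ℝ≥0∞, H y) ≤ (H ∘ f) x} = A := by
        refine inter_eq_left.mpr fun x _ => ?_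
        exact iInf_le H (f x)
      rw [h]
  · -- upper bound
    refine iSup_le fun t => ?_
    rcases eq_empty_or_nonempty (A ∩ {x | t ≤ (H ∘ f) x}) with he | ⟨x, hx⟩
    · rw [he, hμ0, hop0]; exact zero_le
    · have htS : t ≤ ⨆ y : ℝ≥0∞, H y := hx.2.trans (le_iSup H (f x))
      rcases le_or_gt t (⨆ y ∈ Icc 0 p, H y) with hts | hts
      · exact le_max_of_le_left (hop _ _ _ _ hts
          (hμmono _ _ (hmeasH t) hA inter_subset_left))
      · refine le_max_of_le_right (hop _ _ _ _ htS ?_)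
        refine (hμmono _ _ (hmeasH t) (hA.inter (hf measurableSet_Ioi)) ?_).trans key2
        rintro y ⟨hyA, hyf⟩
        refine ⟨hyA, ?_⟩
        show p < f y
        by_contra hle
        push_neg at hle
        exact absurd (hyf.trans (le_iSup₂ (f := fun y _ => H y) (f y) ⟨zero_le, hle⟩))
          (not_le.mpr hts)
end

section
/- Let μ be a continuous monotone measure that is weakly subadditive on A, ∘ nondecreasing with a∘0 = 0, f : X → [0,∞] measurable, H : [0,∞] → [0,∞] with H∘f measurable, and p = Su_{μ,A}(f) < ∞. Then I_{∘,μ,A}(H(f)) ≥ max( (inf H([0,p])) ∘ (μ(A) − p), (inf H) ∘ μ(A) ). -/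
open scoped ENNReal
open Set

variable {X : Type*}

theorem stmt13 [MeasurableSpace X] (μ : Set X → ℝ≥0∞) (A : Set X) (hA : MeasurableSet A)
    (hμ0 : μ ∅ = 0)
    (hμmono : ∀ B C : Set X, MeasurableSet B → MeasurableSet C → B ⊆ C → μ B ≤ μ C)
    (hμbelow : ∀ s : ℕ → Set X, (∀ n, MeasurableSet (s n)) → Monotone s →
      μ (⋃ n, s n) = ⨆ n, μ (s n))
    (hμabove : ∀ s : ℕ → Set X, (∀ n, MeasurableSet (s n)) → Antitone s →
      μ (⋂ n, s n) = ⨅ n, μ (s n))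
    (hμwsub : ∀ B : Set X, MeasurableSet B → μ A ≤ μ (A ∩ B) + μ (A ∩ Bᶜ))
    (op : ℝ≥0∞ → ℝ≥0∞ → ℝ≥0∞)
    (hop : ∀ a b c d : ℝ≥0∞, a ≤ c → b ≤ d → op a b ≤ op c d)
    (hop0 : ∀ a : ℝ≥0∞, op a 0 = 0)
    (f : X → ℝ≥0∞) (hf : Measurable f)
    (H : ℝ≥0∞ → ℝ≥0∞) (hHf : Measurable (H ∘ f))
    (p : ℝ≥0∞) (hp : p = sugeno μ A f) (hpfin : p ≠ ⊤) :
    max (op (⨅ y ∈ Icc 0 p, H y) (μ A - p)) (op (⨅ y : ℝ≥0∞, H y) (μ A))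
      ≤ gSugeno op μ A (H ∘ f) := by

  have hfle : ∀ t : ℝ≥0∞, MeasurableSet {x | t ≤ f x} := fun t =>
    measurableSet_le measurable_const hf
  -- key: μ (A ∩ {p < f}) ≤ p
  have key : μ (A ∩ {x | p < f x}) ≤ p := by
    have hsets : ∀ n : ℕ, MeasurableSet (A ∩ {x | p + (n : ℝ≥0∞)⁻¹ ≤ f x}) := fun n =>
      hA.inter (hfle _)
    have hmono : Monotone (fun n : ℕ => A ∩ {x | p + (n : ℝ≥0∞)⁻¹ ≤ f x}) := by
      intro m n hmn x hx
      refine ⟨hx.1, le_trans (add_le_add_right ?_ p) hx.2⟩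
      exact ENNReal.inv_le_inv.mpr (by exact_mod_cast hmn)
    have hUnion : (⋃ n : ℕ, A ∩ {x | p + (n : ℝ≥0∞)⁻¹ ≤ f x}) = A ∩ {x | p < f x} := by
      apply Set.Subset.antisymm
      · intro x hx
        obtain ⟨n, hxA, hx⟩ := Set.mem_iUnion.mp hx
        exact ⟨hxA, lt_of_lt_of_le (ENNReal.lt_add_right hpfin (by simp)) hx⟩
      · rintro x ⟨hxA, hx⟩
        obtain ⟨n, hn⟩ := ENNReal.exists_inv_nat_lt (tsub_pos_of_lt hx).ne'
        refine Set.mem_iUnion.mpr ⟨n, hxA, ?_⟩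
        calc p + (n : ℝ≥0∞)⁻¹ ≤ p + (f x - p) := add_le_add_right hn.le p
          _ = f x := add_tsub_cancel_of_le hx.le
    rw [← hUnion, hμbelow _ hsets hmono]
    apply iSup_le
    intro n
    have ht : p < p + (n : ℝ≥0∞)⁻¹ := ENNReal.lt_add_right hpfin (by simp)
    have hle : min (p + (n : ℝ≥0∞)⁻¹) (μ (A ∩ {x | p + (n : ℝ≥0∞)⁻¹ ≤ f x})) ≤ p := by
      have := le_iSup (fun t => min t (μ (A ∩ {x | t ≤ f x}))) (p + (n : ℝ≥0∞)⁻¹)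
      rw [← sugeno, ← hp] at this
      exact this
    exact (min_le_iff.mp hle).resolve_left (not_le.mpr ht)
  -- μ A - p ≤ μ (A ∩ {f ≤ p})
  have hsub : μ A - p ≤ μ (A ∩ {x | p < f x}ᶜ) := by
    rw [tsub_le_iff_left]
    calc μ A ≤ μ (A ∩ {x | p < f x}) + μ (A ∩ {x | p < f x}ᶜ) :=
          hμwsub _ (measurableSet_lt measurable_const hf)
      _ ≤ p + μ (A ∩ {x | p < f x}ᶜ) := add_le_add_left key _
  set t0 : ℝ≥0∞ := ⨅ y ∈ Icc 0 p, H y with ht0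
  have hsubset : A ∩ {x | p < f x}ᶜ ⊆ A ∩ {x | t0 ≤ (H ∘ f) x} := by
    rintro x ⟨hxA, hx⟩
    refine ⟨hxA, ?_⟩
    show t0 ≤ H (f x)
    rw [ht0]
    exact iInf₂_le (f x) (Set.mem_Icc.mpr ⟨zero_le, not_lt.mp hx⟩)
  have h1 : op t0 (μ A - p) ≤ gSugeno op μ A (H ∘ f) := by
    refine le_trans ?_ (le_iSup (fun t => op t (μ (A ∩ {x | t ≤ (H ∘ f) x}))) t0)
    refine hop _ _ _ _ le_rfl (le_trans hsub ?_)
    exact hμmono _ _ (hA.inter (measurableSet_lt measurable_const hf).compl)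
      (hA.inter (measurableSet_le measurable_const hHf)) hsubset
  have h2 : op (⨅ y : ℝ≥0∞, H y) (μ A) ≤ gSugeno op μ A (H ∘ f) := by
    refine le_trans ?_ (le_iSup (fun t => op t (μ (A ∩ {x | t ≤ (H ∘ f) x}))) (⨅ y, H y))
    have : A ∩ {x | (⨅ y, H y) ≤ (H ∘ f) x} = A :=
      Set.inter_eq_left.mpr fun x _ => iInf_le H (f x)
    rw [this]
  exact max_le h1 h2
end

section
/- Let μ be a continuous monotone measure that is weakly superadditive on A, ∘ nondecreasing with a∘0 = 0, f : X → [0,∞] measurable, H : [0,∞] → [0,∞] with H∘f measurable, and p = Su_{μ,A}(f) < ∞. Then I_{∘,μ,A}(H(f)) ≤ max( (sup H([p,∞])) ∘ μ(A), (sup H) ∘ (μ(A) − p) ). -/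
open scoped ENNReal
open Set

variable {X : Type*}

theorem stmt14 [MeasurableSpace X] (μ : Set X → ℝ≥0∞) (A : Set X) (hA : MeasurableSet A)
    (hμ0 : μ ∅ = 0)
    (hμmono : ∀ B C : Set X, MeasurableSet B → MeasurableSet C → B ⊆ C → μ B ≤ μ C)
    (hμbelow : ∀ s : ℕ → Set X, (∀ n, MeasurableSet (s n)) → Monotone s →
      μ (⋃ n, s n) = ⨆ n, μ (s n))
    (hμabove : ∀ s : ℕ → Set X, (∀ n, MeasurableSet (s n)) → Antitone s →
      μ (⋂ n, s n) = ⨅ n, μ (s n))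
    (hμwsup : ∀ B : Set X, MeasurableSet B → μ (A ∩ B) + μ (A ∩ Bᶜ) ≤ μ A)
    (op : ℝ≥0∞ → ℝ≥0∞ → ℝ≥0∞)
    (hop : ∀ a b c d : ℝ≥0∞, a ≤ c → b ≤ d → op a b ≤ op c d)
    (hop0 : ∀ a : ℝ≥0∞, op a 0 = 0)
    (f : X → ℝ≥0∞) (hf : Measurable f)
    (H : ℝ≥0∞ → ℝ≥0∞) (hHf : Measurable (H ∘ f))
    (p : ℝ≥0∞) (hp : p = sugeno μ A f) (hpfin : p ≠ ⊤) :
    gSugeno op μ A (H ∘ f)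
      ≤ max (op (⨆ y ∈ Ici p, H y) (μ A)) (op (⨆ y : ℝ≥0∞, H y) (μ A - p)) := by
  -- Notation for level sets of f within A
  set S₁ := ⨆ y ∈ Ici p, H y with hS₁
  set S₂ := ⨆ y : ℝ≥0∞, H y with hS₂
  -- Step 0: for any s < p, μ (A ∩ {s ≤ f}) ≥ p
  have hlow : ∀ s : ℝ≥0∞, s < p → p ≤ μ (A ∩ {x | s ≤ f x}) := by
    intro s hs
    have h1 : p ≤ max s (μ (A ∩ {x | s ≤ f x})) := by
      rw [hp, sugeno]
      apply iSup_le
      intro t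
      rcases le_total t s with h | h
      · exact le_max_of_le_left ((min_le_left _ _).trans h)
      · refine le_max_of_le_right ((min_le_right _ _).trans ?_)
        apply hμmono
        · exact hA.inter (hf measurableSet_Ici)
        · exact hA.inter (hf measurableSet_Ici)
        · exact inter_subset_inter_right _ (fun x hx => h.trans hx)
    rcases max_cases s (μ (A ∩ {x | s ≤ f x})) with ⟨he, _⟩ | ⟨he, _⟩
    · rw [he] at h1; exact absurd h1 (not_le.mpr hs)
    · rwa [he] at h1
  -- Step 1: μ (A ∩ {p ≤ f}) ≥ p
  have hkey : p ≤ μ (A ∩ {x | p ≤ f x}) := by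
    rcases eq_or_ne p 0 with hp0 | hp0
    · simp [hp0]
    · -- continuity from above with s n = p - (n+1)⁻¹
      set s : ℕ → Set X := fun n => A ∩ {x | p - ((n : ℝ≥0∞) + 1)⁻¹ ≤ f x} with hsdef
      have hmeas : ∀ n, MeasurableSet (s n) := fun n => hA.inter (hf measurableSet_Ici)
      have hanti : Antitone s := by
        intro m n hmn
        apply inter_subset_inter_right
        intro x hx
        refine le_trans (tsub_le_tsub_left ?_ p) hx
        exact ENNReal.inv_le_inv.mpr (add_le_add_left (Nat.cast_le.mpr hmn) 1)
      have hinter : ⋂ n, s n = A ∩ {x | p ≤ f x} := by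
        ext x
        simp only [mem_iInter, hsdef, mem_inter_iff, mem_setOf_eq]
        constructor
        · intro h
          refine ⟨(h 0).1, ?_⟩
          rcases eq_or_ne (f x) ⊤ with hfx | hfx
          · simp [hfx]
          · apply ENNReal.le_of_forall_pos_le_add
            intro ε hε _
            obtain ⟨n, hn⟩ := ENNReal.exists_inv_nat_lt (a := (ε : ℝ≥0∞)) (by
              exact_mod_cast hε.ne')
            have h2 : p - ((n : ℝ≥0∞) + 1)⁻¹ ≤ f x := (h n).2
            have h3 : p ≤ f x + ((n : ℝ≥0∞) + 1)⁻¹ := tsub_le_iff_right.mp h2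
            refine h3.trans (add_le_add_right ?_ _)
            refine le_of_lt (lt_of_le_of_lt ?_ hn)
            exact ENNReal.inv_le_inv.mpr (by simp)
        · intro ⟨hxA, hxf⟩ n
          exact ⟨hxA, le_trans tsub_le_self hxf⟩
      have := hμabove s hmeas hanti
      rw [hinter] at this
      rw [this]
      refine le_iInf fun n => hlow _ ?_
      exact ENNReal.sub_lt_self hpfin hp0 (by simp)
  -- Step 2: μ (A ∩ {f < p}) ≤ μ A - p
  have hD : μ (A ∩ {x | f x < p}) ≤ μ A - p := by
    have hw := hμwsup {x | p ≤ f x} (hf measurableSet_Ici)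
    have hc : {x | p ≤ f x}ᶜ = {x | f x < p} := by
      ext x; simp [not_le]
    rw [hc] at hw
    refine ENNReal.le_sub_of_add_le_right hpfin ?_
    calc μ (A ∩ {x | f x < p}) + p
        ≤ μ (A ∩ {x | f x < p}) + μ (A ∩ {x | p ≤ f x}) := add_le_add_right hkey _
      _ ≤ μ A := by rw [add_comm]; exact hw
  -- Step 3: the main bound
  rw [gSugeno]
  apply iSup_le
  intro t
  set B := A ∩ {x | t ≤ (H ∘ f) x} with hB
  by_cases hex : ∃ x ∈ B, p ≤ f x
  · obtain ⟨x, hxB, hxp⟩ := hex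
    refine le_max_of_le_left (hop _ _ _ _ ?_ ?_)
    · calc t ≤ H (f x) := hxB.2
        _ ≤ S₁ := le_biSup H hxp
    · exact hμmono _ _ (hA.inter (hHf measurableSet_Ici)) hA inter_subset_left
  · rcases eq_or_ne B ∅ with hBe | hBe
    · rw [hBe, hμ0, hop0]
      exact zero_le
    · obtain ⟨x, hxB⟩ := nonempty_iff_ne_empty.mpr hBe
      refine le_max_of_le_right (hop _ _ _ _ ?_ ?_)
      · calc t ≤ H (f x) := hxB.2
          _ ≤ S₂ := le_iSup H (f x)
      · refine le_trans ?_ hD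
        apply hμmono
        · exact hA.inter (hHf measurableSet_Ici)
        · exact hA.inter (hf measurableSet_Iio)
        · intro y hy
          refine ⟨hy.1, ?_⟩
          by_contra hc
          exact hex ⟨y, hy, not_lt.mp hc⟩
end

section
/- Let μ be a monotone measure, H : [0,∞) → [0,∞) a concave function, f : X → [0,∞) measurable, p = Su_{μ,A}(f) < ∞, and m_p an element of the superdifferential of H at p (so H(y) ≤ H(p) + m_p(y−p) for all y ≥ 0). Then Su_{μ,A}(H∘f) ≤ min(H(p), μ(A)) + Su_{μ,A}((m_p(f − p))⁺). -/
open scoped ENNReal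
open Set

variable {X : Type*}

theorem aux_min (c s M N : ℝ≥0∞) (hMN : M ≤ N) : min (c + s) M ≤ min c N + min s M := by
  rcases le_total s M with h2 | h2
  · rw [min_eq_left h2]
    rcases le_total c N with h | h
    · rw [min_eq_left h]; exact min_le_left _ _
    · rw [min_eq_right h]
      exact le_add_right (le_trans (min_le_right _ _) hMN)
  · rw [min_eq_right h2]
    exact le_add_left (min_le_right _ _)

theorem stmt16 [MeasurableSpace X] (μ : Set X → ℝ≥0∞) (A : Set X) (hA : MeasurableSet A)
    (hμ0 : μ ∅ = 0)
    (hμmono : ∀ B C : Set X, MeasurableSet B → MeasurableSet C → B ⊆ C → μ B ≤ μ C)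
    (f : X → ℝ) (hf : Measurable f) (hfpos : ∀ x, 0 ≤ f x)
    (H : ℝ → ℝ) (hHpos : ∀ y ∈ Ici (0 : ℝ), 0 ≤ H y)
    (hHconc : ConcaveOn ℝ (Ici (0 : ℝ)) H)
    (p : ℝ≥0∞) (hp : p = sugeno μ A (fun x => ENNReal.ofReal (f x))) (hpfin : p ≠ ⊤)
    (m : ℝ) (hm : ∀ y ∈ Ici (0 : ℝ), H y ≤ H p.toReal + m * (y - p.toReal)) :
    sugeno μ A (fun x => ENNReal.ofReal (H (f x)))
      ≤ min (ENNReal.ofReal (H p.toReal)) (μ A)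
        + sugeno μ A (fun x => ENNReal.ofReal (m * (f x - p.toReal))) := by
  set c : ℝ≥0∞ := ENNReal.ofReal (H p.toReal) with hc
  set g : X → ℝ≥0∞ := fun x => ENNReal.ofReal (m * (f x - p.toReal)) with hg
  have hgmeas : Measurable g :=
    ENNReal.measurable_ofReal.comp (measurable_const.mul (hf.sub measurable_const))
  have hfb : ∀ x, ENNReal.ofReal (H (f x)) ≤ c + g x := fun x => by
    calc ENNReal.ofReal (H (f x))
        ≤ ENNReal.ofReal (H p.toReal + m * (f x - p.toReal)) :=
          ENNReal.ofReal_le_ofReal (hm _ (hfpos x))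
      _ ≤ c + g x := ENNReal.ofReal_add_le
  rw [sugeno]
  refine iSup_le fun t => ?_
  rcases eq_or_ne t ⊤ with rfl | htop
  · have : {x | (⊤ : ℝ≥0∞) ≤ ENNReal.ofReal (H (f x))} = ∅ := by
      ext x; simp [top_le_iff, ENNReal.ofReal_ne_top]
    simp [this, hμ0]
  · -- measurability of the level set
    have hSmeas : MeasurableSet {x | t ≤ ENNReal.ofReal (H (f x))} := by
      have hTconv : Convex ℝ {y ∈ Ici (0:ℝ) | t.toReal ≤ H y} := hHconc.convex_ge _
      have hTmeas : MeasurableSet {y ∈ Ici (0:ℝ) | t.toReal ≤ H y} :=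
        hTconv.ordConnected.measurableSet
      have heq : {x | t ≤ ENNReal.ofReal (H (f x))}
          = f ⁻¹' {y ∈ Ici (0:ℝ) | t.toReal ≤ H y} := by
        ext x
        simp only [mem_setOf_eq, mem_preimage, mem_Ici]
        constructor
        · intro h
          exact ⟨hfpos x, (ENNReal.le_ofReal_iff_toReal_le htop (hHpos _ (hfpos x))).1 h⟩
        · intro ⟨_, h⟩
          exact (ENNReal.le_ofReal_iff_toReal_le htop (hHpos _ (hfpos x))).2 h
      rw [heq]
      exact hf hTmeas
    have hctop : c ≠ ⊤ := ENNReal.ofReal_ne_top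
    rcases le_total t c with hle | hle
    · refine le_trans (le_trans (min_le_min hle
        (hμmono _ _ (hA.inter hSmeas) hA inter_subset_left)) le_rfl) le_self_add
    · -- t = c + s with s = t - c
      set s : ℝ≥0∞ := t - c with hs
      have hts : t = c + s := (add_tsub_cancel_of_le hle).symm
      have hsub : A ∩ {x | t ≤ ENNReal.ofReal (H (f x))} ⊆ A ∩ {x | s ≤ g x} := by
        rintro x ⟨hxA, hx⟩
        refine ⟨hxA, ?_⟩
        have : c + s ≤ c + g x := by
          rw [← hts]; exact le_trans hx (hfb x)
        exact (ENNReal.add_le_add_iff_left hctop).1 this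
      have hGmeas : MeasurableSet {x | s ≤ g x} :=
        measurableSet_le measurable_const hgmeas
      have hμle : μ (A ∩ {x | t ≤ ENNReal.ofReal (H (f x))}) ≤ μ (A ∩ {x | s ≤ g x}) :=
        hμmono _ _ (hA.inter hSmeas) (hA.inter hGmeas) hsub
      have hMA : μ (A ∩ {x | s ≤ g x}) ≤ μ A :=
        hμmono _ _ (hA.inter hGmeas) hA inter_subset_left
      calc min t (μ (A ∩ {x | t ≤ ENNReal.ofReal (H (f x))}))
          ≤ min (c + s) (μ (A ∩ {x | s ≤ g x})) := by
            rw [← hts]; exact min_le_min le_rfl hμle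
        _ ≤ min c (μ A) + min s (μ (A ∩ {x | s ≤ g x})) := aux_min _ _ _ _ hMA
        _ ≤ min c (μ A) + sugeno μ A g := by
            gcongr
            exact le_iSup (fun u => min u (μ (A ∩ {x | u ≤ g x}))) s
end

section
/- Let μ be a monotone measure, H : [0,∞) → [0,∞) concave, m_p ∈ ∂H(p) with p = Su_{μ,A}(f) < ∞, and f : X → [0,∞) measurable. Then Su_{μ,A}(H∘f) ≤ min((H(p) − p·m_p)⁺, μ(A)) + Su_{μ,A}(m_p⁺ · f). -/
open scoped ENNReal
open Set

variable {X : Type*}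

private lemma min_add_le_min_add_min (a b u : ℝ≥0∞) :
    min (a + b) u ≤ min a u + min b u := by
  rcases le_total u a with ha | ha
  · rw [min_eq_right ha]
    exact le_trans (min_le_right _ _) le_self_add
  · rcases le_total u b with hb | hb
    · rw [min_eq_right hb]
      exact le_trans (min_le_right _ _) le_add_self
    · rw [min_eq_left ha, min_eq_left hb]
      exact min_le_left _ _

/-- measurability of `H ∘ f` for `H` concave on `[0, ∞)` and `f` nonnegative measurable. -/
private lemma measurable_comp_concave [MeasurableSpace X]
    (f : X → ℝ) (hf : Measurable f) (hfpos : ∀ x, 0 ≤ f x)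
    (H : ℝ → ℝ) (hHconc : ConcaveOn ℝ (Ici (0 : ℝ)) H) :
    Measurable fun x => H (f x) := by
  have hcont : ContinuousOn H (Ioi (0 : ℝ)) := by
    simpa [interior_Ici] using hHconc.continuousOn_interior
  refine measurable_of_Iio fun a => ?_
  have key : (fun x => H (f x)) ⁻¹' Iio a
      = (if H 0 < a then f ⁻¹' {0} else (∅ : Set X))
        ∪ f ⁻¹' (Ioi 0 ∩ H ⁻¹' Iio a) := by
    by_cases ha : H 0 < a
    · rw [if_pos ha]
      ext x
      constructor
      · intro hx
        rcases eq_or_lt_of_le (hfpos x) with h0 | h0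
        · exact Or.inl (by simp [← h0])
        · exact Or.inr ⟨h0, hx⟩
      · rintro (hx | hx)
        · simp only [mem_preimage, mem_singleton_iff] at hx
          simpa [hx] using ha
        · exact hx.2
    · rw [if_neg ha]
      ext x
      constructor
      · intro hx
        rcases eq_or_lt_of_le (hfpos x) with h0 | h0
        · exact absurd (show H 0 < a by rw [h0]; exact hx) ha
        · exact Or.inr ⟨h0, hx⟩
      · rintro (hx | hx)
        · exact absurd hx (notMem_empty x)
        · exact hx.2
  rw [key]
  have hopen : MeasurableSet (Ioi (0 : ℝ) ∩ H ⁻¹' Iio a) :=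
    (hcont.isOpen_inter_preimage isOpen_Ioi isOpen_Iio).measurableSet
  refine MeasurableSet.union ?_ (hf hopen)
  split
  · exact hf (measurableSet_singleton 0)
  · exact MeasurableSet.empty

theorem stmt17 [MeasurableSpace X] (μ : Set X → ℝ≥0∞) (A : Set X) (hA : MeasurableSet A)
    (hμ0 : μ ∅ = 0)
    (hμmono : ∀ B C : Set X, MeasurableSet B → MeasurableSet C → B ⊆ C → μ B ≤ μ C)
    (f : X → ℝ) (hf : Measurable f) (hfpos : ∀ x, 0 ≤ f x)
    (H : ℝ → ℝ) (hHpos : ∀ y ∈ Ici (0 : ℝ), 0 ≤ H y)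
    (hHconc : ConcaveOn ℝ (Ici (0 : ℝ)) H)
    (p : ℝ≥0∞) (hp : p = sugeno μ A (fun x => ENNReal.ofReal (f x))) (hpfin : p ≠ ⊤)
    (m : ℝ) (hm : ∀ y ∈ Ici (0 : ℝ), H y ≤ H p.toReal + m * (y - p.toReal)) :
    sugeno μ A (fun x => ENNReal.ofReal (H (f x)))
      ≤ min (ENNReal.ofReal (H p.toReal - p.toReal * m)) (μ A)
        + sugeno μ A (fun x => ENNReal.ofReal (max m 0 * f x)) := by
  set c : ℝ := H p.toReal - p.toReal * m with hc
  set c' : ℝ≥0∞ := ENNReal.ofReal c with hc'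
  set g : X → ℝ≥0∞ := fun x => ENNReal.ofReal (H (f x)) with hg
  set h : X → ℝ≥0∞ := fun x => ENNReal.ofReal (max m 0 * f x) with hh
  have hgmeas : Measurable g :=
    ENNReal.measurable_ofReal.comp (measurable_comp_concave f hf hfpos H hHconc)
  have hhmeas : Measurable h :=
    ENNReal.measurable_ofReal.comp ((measurable_const.mul hf))
  -- pointwise bound: g ≤ c' + h
  have hpt : ∀ x, g x ≤ c' + h x := by
    intro x
    have h1 : H (f x) ≤ c + max m 0 * f x := by
      have := hm (f x) (hfpos x)
      have h2 : m * f x ≤ max m 0 * f x :=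
        mul_le_mul_of_nonneg_right (le_max_left _ _) (hfpos x)
      nlinarith
    calc g x ≤ ENNReal.ofReal (c + max m 0 * f x) := ENNReal.ofReal_le_ofReal h1
      _ ≤ c' + h x := ENNReal.ofReal_add_le
  refine iSup_le fun t => ?_
  have hSmeas : MeasurableSet (A ∩ {x | t ≤ g x}) :=
    hA.inter (hgmeas measurableSet_Ici)
  rcases le_total t c' with ht | ht
  · refine le_trans (le_trans ?_ (min_le_min_right _ ht)) le_self_add
    exact min_le_min_left _ (hμmono _ _ hSmeas hA inter_subset_left)
  · -- t = c' + s
    set s : ℝ≥0∞ := t - c' with hs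
    have hts : t = c' + s := by
      rw [hs, add_tsub_cancel_of_le ht]
    have hsub : A ∩ {x | t ≤ g x} ⊆ A ∩ {x | s ≤ h x} := by
      intro x ⟨hxA, hxg⟩
      refine ⟨hxA, ?_⟩
      have h2 : t ≤ c' + h x := le_trans hxg (hpt x)
      show s ≤ h x
      rw [hs]
      exact tsub_le_iff_left.mpr h2
    have hμle : μ (A ∩ {x | t ≤ g x}) ≤ μ (A ∩ {x | s ≤ h x}) :=
      hμmono _ _ hSmeas (hA.inter (hhmeas measurableSet_Ici)) hsub
    calc min t (μ (A ∩ {x | t ≤ g x}))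
        ≤ min c' (μ (A ∩ {x | t ≤ g x})) + min s (μ (A ∩ {x | t ≤ g x})) := by
          rw [hts]; exact min_add_le_min_add_min _ _ _
      _ ≤ min c' (μ A) + min s (μ (A ∩ {x | s ≤ h x})) :=
          add_le_add (min_le_min_left _ (hμmono _ _ hSmeas hA inter_subset_left))
            (min_le_min_left _ hμle)
      _ ≤ min c' (μ A) + sugeno μ A h := by
          gcongr
          exact le_iSup (fun u => min u (μ (A ∩ {x | u ≤ h x}))) s
end

section
/- Let μ be a continuous monotone measure, ⋆ : [0,∞)×(−∞,0] → ℝ a nondecreasing binary map, and H : ℝ → ℝ nondecreasing with H(0) = 0. For measurable f : X → ℝ with p₁ = Su_{μ,A}(f⁺) < ∞, p₂ = Su_{μ,A}(f⁻) < ∞, and p₁ ≤ sup H, the ⋆-symmetric Sugeno integral Su^⋆_{μ,A}(H(f)) := Su_{μ,A}((H∘f)⁺) ⋆ (−Su_{μ,A}((H∘f)⁻)) satisfies Su^⋆_{μ,A}(H(f)) ≤ [ min( max(H(p₁), p₁), μ(A) ) ] ⋆ [ max( H(−p₂), −p₂ ) ]. -/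
open scoped ENNReal
open Set

variable {X : Type*}

/-- Jensen type upper bound for the ⋆-symmetric Sugeno integral
`Su^⋆(H(f)) = Su((H∘f)⁺) ⋆ (− Su((H∘f)⁻))`, where `⋆ : [0,∞)×(−∞,0] → ℝ` is a
nondecreasing binary map (modelled as a map `ℝ → ℝ → ℝ` monotone on that domain). -/
theorem stmt19 [MeasurableSpace X] (μ : Set X → ℝ≥0∞) (A : Set X) (hA : MeasurableSet A)
    (hμ0 : μ ∅ = 0)
    (hμmono : ∀ B C : Set X, MeasurableSet B → MeasurableSet C → B ⊆ C → μ B ≤ μ C)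
    (hμbelow : ∀ s : ℕ → Set X, (∀ n, MeasurableSet (s n)) → Monotone s →
      μ (⋃ n, s n) = ⨆ n, μ (s n))
    (hμabove : ∀ s : ℕ → Set X, (∀ n, MeasurableSet (s n)) → Antitone s →
      μ (⋂ n, s n) = ⨅ n, μ (s n))
    (star : ℝ → ℝ → ℝ)
    (hstar : ∀ a b c d : ℝ, 0 ≤ a → a ≤ c → b ≤ d → d ≤ 0 → star a b ≤ star c d)
    (H : ℝ → ℝ) (hH : Monotone H) (hH0 : H 0 = 0)
    (f : X → ℝ) (hf : Measurable f)
    (p₁ p₂ q₁ q₂ : ℝ≥0∞)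
    (hp₁ : p₁ = sugeno μ A (fun x => ENNReal.ofReal (f x)))
    (hp₂ : p₂ = sugeno μ A (fun x => ENNReal.ofReal (-f x)))
    (hq₁ : q₁ = sugeno μ A (fun x => ENNReal.ofReal (H (f x))))
    (hq₂ : q₂ = sugeno μ A (fun x => ENNReal.ofReal (-H (f x))))
    (hp₁fin : p₁ ≠ ⊤) (hp₂fin : p₂ ≠ ⊤) (hq₁fin : q₁ ≠ ⊤) (hq₂fin : q₂ ≠ ⊤)
    (hsupH : ∀ ε : ℝ, 0 < ε → ∃ y : ℝ, p₁.toReal - ε ≤ H y) :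
    star q₁.toReal (-q₂.toReal)
      ≤ star ((min (ENNReal.ofReal (max (H p₁.toReal) p₁.toReal)) (μ A)).toReal)
             (max (H (-p₂.toReal)) (-p₂.toReal)) := by
  classical
  -- Basic facts about the Sugeno integral
  have key_le : ∀ g : X → ℝ≥0∞, ∀ t : ℝ≥0∞,
      min t (μ (A ∩ {x | t ≤ g x})) ≤ sugeno μ A g := by
    intro g t
    rw [sugeno]
    exact le_iSup (fun t : ℝ≥0∞ => min t (μ (A ∩ {x | t ≤ g x}))) t
  have key_strict : ∀ g : X → ℝ≥0∞, ∀ t : ℝ≥0∞, sugeno μ A g < t →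
      μ (A ∩ {x | t ≤ g x}) ≤ sugeno μ A g := by
    intro g t ht
    by_contra h
    push_neg at h
    exact absurd (key_le g t) (not_le.mpr (lt_min ht h))
  have key_lower : ∀ g : X → ℝ≥0∞, ∀ t : ℝ≥0∞, t < sugeno μ A g →
      ∃ s, t < s ∧ t < μ (A ∩ {x | s ≤ g x}) := by
    intro g t ht
    rw [sugeno, lt_iSup_iff] at ht
    obtain ⟨s, hs⟩ := ht
    exact ⟨s, (lt_min_iff.mp hs).1, (lt_min_iff.mp hs).2⟩
  have hsubhelper : ∀ a b : ℝ≥0∞, a ≠ ⊤ →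
      (∀ n : ℕ, a - ((n : ℝ≥0∞) + 1)⁻¹ ≤ b) → a ≤ b := by
    intro a b ha h
    by_contra hab
    push_neg at hab
    have hne : a - b ≠ 0 := by simpa [tsub_eq_zero_iff_le] using not_le.mpr hab
    obtain ⟨n, hn⟩ := ENNReal.exists_inv_nat_lt hne
    have hb : b ≠ ⊤ := (hab.trans (lt_top_iff_ne_top.mpr ha)).ne
    have hninv : (n : ℝ≥0∞)⁻¹ ≠ ⊤ :=
      ((lt_of_lt_of_le hn tsub_le_self).trans ha.lt_top).ne
    have h1 : b + (n : ℝ≥0∞)⁻¹ < a := by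
      calc b + (n : ℝ≥0∞)⁻¹ < b + (a - b) := ENNReal.add_lt_add_left hb hn
      _ = a := add_tsub_cancel_of_le hab.le
    have h2 : b < a - (n : ℝ≥0∞)⁻¹ := (ENNReal.cancel_of_ne hninv).lt_tsub_iff_right.mpr h1
    have h3 : a - (n : ℝ≥0∞)⁻¹ ≤ a - ((n : ℝ≥0∞) + 1)⁻¹ :=
      tsub_le_tsub_left (ENNReal.inv_le_inv.mpr le_self_add) _
    exact absurd (h n) (not_le.mpr (h2.trans_le h3))
  have hHf : Measurable fun x => H (f x) := hH.measurable.comp hf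
  have hg₁ : Measurable fun x => ENNReal.ofReal (f x) :=
    ENNReal.measurable_ofReal.comp hf
  have hg₂ : Measurable fun x => ENNReal.ofReal (-f x) :=
    ENNReal.measurable_ofReal.comp hf.neg
  have hgH₁ : Measurable fun x => ENNReal.ofReal (H (f x)) :=
    ENNReal.measurable_ofReal.comp hHf
  have hp₁eq : ENNReal.ofReal p₁.toReal = p₁ := ENNReal.ofReal_toReal hp₁fin
  have hp₂eq : ENNReal.ofReal p₂.toReal = p₂ := ENNReal.ofReal_toReal hp₂fin
  -- Claim 1 : q₁ ≤ μ A
  have hclaim1 : q₁ ≤ μ A := by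
    rw [hq₁, sugeno]
    refine iSup_le fun t => le_trans (min_le_right _ _) ?_
    exact hμmono _ _ (hA.inter (hgH₁ measurableSet_Ici)) hA inter_subset_left
  -- continuity-from-below bound
  have hB : μ (A ∩ {x | p₁ < ENNReal.ofReal (f x)}) ≤ p₁ := by
    set s : ℕ → Set X := fun n => A ∩ {x | p₁ + (n : ℝ≥0∞)⁻¹ ≤ ENNReal.ofReal (f x)} with hs
    have hmeas : ∀ n, MeasurableSet (s n) := fun n => hA.inter (hg₁ measurableSet_Ici)
    have hmono : Monotone s := by
      intro n k hnk x hx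
      refine ⟨hx.1, ?_⟩
      have hx2 : p₁ + (n : ℝ≥0∞)⁻¹ ≤ ENNReal.ofReal (f x) := hx.2
      show p₁ + (k : ℝ≥0∞)⁻¹ ≤ ENNReal.ofReal (f x)
      refine le_trans ?_ hx2
      gcongr
    have hunion : (⋃ n, s n) = A ∩ {x | p₁ < ENNReal.ofReal (f x)} := by
      ext x
      simp only [hs, mem_iUnion, mem_inter_iff, mem_setOf_eq]
      constructor
      · rintro ⟨n, hxA, hn⟩
        exact ⟨hxA, lt_of_lt_of_le
          (ENNReal.lt_add_right hp₁fin (ENNReal.inv_ne_zero.mpr (ENNReal.natCast_ne_top n))) hn⟩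
      · rintro ⟨hxA, hx⟩
        have hne : ENNReal.ofReal (f x) - p₁ ≠ 0 := by
          simpa [tsub_eq_zero_iff_le] using not_le.mpr hx
        obtain ⟨n, hn⟩ := ENNReal.exists_inv_nat_lt hne
        refine ⟨n, hxA, ?_⟩
        calc p₁ + (n : ℝ≥0∞)⁻¹ ≤ p₁ + (ENNReal.ofReal (f x) - p₁) := by gcongr
        _ = ENNReal.ofReal (f x) := add_tsub_cancel_of_le hx.le
    rw [← hunion, hμbelow s hmeas hmono]
    refine iSup_le fun n => ?_
    have hlt : sugeno μ A (fun x => ENNReal.ofReal (f x)) < p₁ + (n : ℝ≥0∞)⁻¹ := by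
      rw [← hp₁]
      exact ENNReal.lt_add_right hp₁fin (ENNReal.inv_ne_zero.mpr (ENNReal.natCast_ne_top n))
    have h := key_strict (fun x => ENNReal.ofReal (f x)) (p₁ + (n : ℝ≥0∞)⁻¹) hlt
    rw [← hp₁] at h
    exact h
  -- Claim 2 : q₁ ≤ ofReal (max (H p₁.toReal) p₁.toReal)
  have hclaim2 : q₁ ≤ ENNReal.ofReal (max (H p₁.toReal) p₁.toReal) := by
    rw [hq₁, sugeno]
    refine iSup_le fun t => ?_
    rcases le_or_gt t (ENNReal.ofReal (H p₁.toReal)) with h | h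
    · exact le_trans (min_le_left _ _)
        (h.trans (ENNReal.ofReal_le_ofReal (le_max_left _ _)))
    · refine le_trans (min_le_right _ _) ?_
      have hsub : A ∩ {x | t ≤ ENNReal.ofReal (H (f x))}
          ⊆ A ∩ {x | p₁ < ENNReal.ofReal (f x)} := by
        rintro x ⟨hxA, hx⟩
        refine ⟨hxA, ?_⟩
        have h1 : ENNReal.ofReal (H p₁.toReal) < ENNReal.ofReal (H (f x)) :=
          lt_of_lt_of_le h hx
        have h2 : H p₁.toReal < H (f x) := by
          by_contra hc
          push_neg at hc
          exact absurd (ENNReal.ofReal_le_ofReal hc) (not_le.mpr h1)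
        have h3 : p₁.toReal < f x := by
          by_contra hc
          push_neg at hc
          exact absurd (hH hc) (not_le.mpr h2)
        calc p₁ = ENNReal.ofReal p₁.toReal := hp₁eq.symm
        _ < ENNReal.ofReal (f x) :=
          (ENNReal.ofReal_lt_ofReal_iff (lt_of_le_of_lt ENNReal.toReal_nonneg h3)).mpr h3
      refine le_trans (hμmono _ _ (hA.inter (hgH₁ measurableSet_Ici))
        (hA.inter (hg₁ measurableSet_Ioi)) hsub) ?_
      refine hB.trans ?_
      conv_lhs => rw [← hp₁eq]
      exact ENNReal.ofReal_le_ofReal (le_max_right _ _)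
  -- Claim 3 : min (-H (-p₂.toReal)) p₂.toReal ≤ q₂.toReal
  have hclaim3 : min (-H (-p₂.toReal)) p₂.toReal ≤ q₂.toReal := by
    rcases eq_or_ne p₂ 0 with h0 | h0
    · simp [h0, hH0, ENNReal.toReal_nonneg]
    rcases le_or_gt (min (-H (-p₂.toReal)) p₂.toReal) 0 with hm | hm
    · exact hm.trans ENNReal.toReal_nonneg
    set m := min (-H (-p₂.toReal)) p₂.toReal with hmdef
    -- continuity-from-above bound
    set T : ℕ → Set X :=
      fun n => A ∩ {x | p₂ - ((n : ℝ≥0∞) + 1)⁻¹ < ENNReal.ofReal (-f x)} with hT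
    have hTmeas : ∀ n, MeasurableSet (T n) := fun n => hA.inter (hg₂ measurableSet_Ioi)
    have hTanti : Antitone T := by
      intro n k hnk x hx
      refine ⟨hx.1, ?_⟩
      have hx2 : p₂ - ((k : ℝ≥0∞) + 1)⁻¹ < ENNReal.ofReal (-f x) := hx.2
      show p₂ - ((n : ℝ≥0∞) + 1)⁻¹ < ENNReal.ofReal (-f x)
      refine lt_of_le_of_lt ?_ hx2
      gcongr
    have hinvne : ∀ n : ℕ, ((n : ℝ≥0∞) + 1)⁻¹ ≠ 0 :=
      fun n => ENNReal.inv_ne_zero.mpr (by simp [ENNReal.natCast_ne_top])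
    have hTinter : (⋂ n, T n) = A ∩ {x | p₂ ≤ ENNReal.ofReal (-f x)} := by
      ext x
      simp only [hT, mem_iInter, mem_inter_iff, mem_setOf_eq]
      constructor
      · intro h
        exact ⟨(h 0).1, hsubhelper p₂ _ hp₂fin fun n => ((h n).2).le⟩
      · rintro ⟨hxA, hx⟩ n
        exact ⟨hxA, lt_of_lt_of_le (ENNReal.sub_lt_self hp₂fin h0 (hinvne n)) hx⟩
    have hTlb : ∀ k, p₂ ≤ μ (T k) := by
      intro k
      refine hsubhelper p₂ _ hp₂fin fun n => ?_
      set j := max n k with hj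
      have hdj : p₂ - ((j : ℝ≥0∞) + 1)⁻¹ < sugeno μ A (fun x => ENNReal.ofReal (-f x)) := by
        rw [← hp₂]
        exact ENNReal.sub_lt_self hp₂fin h0 (hinvne j)
      obtain ⟨s, hs1, hs2⟩ := key_lower _ _ hdj
      have hsubj : A ∩ {x | s ≤ ENNReal.ofReal (-f x)} ⊆ T j := by
        intro x hx
        have hx2 : s ≤ ENNReal.ofReal (-f x) := hx.2
        exact ⟨hx.1, lt_of_lt_of_le hs1 hx2⟩
      have h1 : p₂ - ((j : ℝ≥0∞) + 1)⁻¹ ≤ μ (T j) :=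
        hs2.le.trans (hμmono _ _ (hA.inter (hg₂ measurableSet_Ici)) (hTmeas j) hsubj)
      have h2 : μ (T j) ≤ μ (T k) :=
        hμmono _ _ (hTmeas j) (hTmeas k) (hTanti (le_max_right n k))
      refine le_trans ?_ (h1.trans h2)
      gcongr
      exact_mod_cast le_max_left n k
    have hC : p₂ ≤ μ (A ∩ {x | p₂ ≤ ENNReal.ofReal (-f x)}) := by
      rw [← hTinter, hμabove T hTmeas hTanti]
      exact le_iInf hTlb
    have hppos : 0 < p₂.toReal := ENNReal.toReal_pos h0 hp₂fin
    have hsub : A ∩ {x | p₂ ≤ ENNReal.ofReal (-f x)}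
        ⊆ A ∩ {x | ENNReal.ofReal m ≤ ENNReal.ofReal (-H (f x))} := by
      rintro x ⟨hxA, hx⟩
      refine ⟨hxA, ENNReal.ofReal_le_ofReal ?_⟩
      have h1 : p₂.toReal ≤ -f x := by
        by_contra hc
        push_neg at hc
        rw [← hp₂eq] at hx
        exact absurd hx (not_le.mpr ((ENNReal.ofReal_lt_ofReal_iff hppos).mpr hc))
      have h2 : f x ≤ -p₂.toReal := by linarith
      calc m ≤ -H (-p₂.toReal) := min_le_left _ _
      _ ≤ -H (f x) := neg_le_neg (hH h2)
    have hmle : ENNReal.ofReal m ≤ q₂ := by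
      have hμ' : ENNReal.ofReal m ≤ μ (A ∩ {x | ENNReal.ofReal m ≤ ENNReal.ofReal (-H (f x))}) := by
        refine le_trans ?_ (hC.trans (hμmono _ _ (hA.inter (hg₂ measurableSet_Ici))
          (hA.inter ((ENNReal.measurable_ofReal.comp hHf.neg) measurableSet_Ici)) hsub))
        conv_rhs => rw [← hp₂eq]
        exact ENNReal.ofReal_le_ofReal (min_le_right _ _)
      calc ENNReal.ofReal m
          = min (ENNReal.ofReal m) (μ (A ∩ {x | ENNReal.ofReal m ≤ ENNReal.ofReal (-H (f x))})) :=
            (min_eq_left hμ').symm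
      _ ≤ sugeno μ A (fun x => ENNReal.ofReal (-H (f x))) := key_le _ _
      _ = q₂ := hq₂.symm
    have := ENNReal.toReal_mono hq₂fin hmle
    rwa [ENNReal.toReal_ofReal hm.le] at this
  -- final assembly
  have hc : min (ENNReal.ofReal (max (H p₁.toReal) p₁.toReal)) (μ A) ≠ ⊤ :=
    ne_top_of_le_ne_top ENNReal.ofReal_ne_top (min_le_left _ _)
  have h1 : q₁.toReal ≤ (min (ENNReal.ofReal (max (H p₁.toReal) p₁.toReal)) (μ A)).toReal :=
    ENNReal.toReal_mono hc (le_min hclaim2 hclaim1)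
  have h2 : -q₂.toReal ≤ max (H (-p₂.toReal)) (-p₂.toReal) := by
    rw [neg_le, ← min_neg_neg, neg_neg]
    exact hclaim3
  have hd : max (H (-p₂.toReal)) (-p₂.toReal) ≤ 0 :=
    max_le (by simpa [hH0] using hH (neg_nonpos.mpr ENNReal.toReal_nonneg))
      (neg_nonpos.mpr ENNReal.toReal_nonneg)
  exact hstar _ _ _ _ ENNReal.toReal_nonneg h1 h2 hd
end
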